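/- arXiv:2003.09767 — 10 statements merged into one kernel-verified Lean document; each statement's English description precedes it below -/
import Mathlib

section
/- Let G be a semigroup, let E and Y be real Banach spaces with bounded representations u and v of G respectively, with sup_{g∈G}‖u(g)‖ ≤ M and sup_{g∈G}‖v(g)‖ ≤ M, let X be a closed subspace of E with u(g)X ⊆ X for all g ∈ G, and let Ω : Y → E be any map. Then the following are equivalent: (i) there is C ≥ 0 such that for all g ∈ G and y ∈ Y, u(g)(Ω y) − Ω(v(g) y) ∈ X and ‖u(g)(Ω y) − Ω(v(g) y)‖ ≤ C‖y‖ (i.e. Ω is a G-centralizer); (ii) there is C' ≥ 0 such that for all g ∈ G and all pairs (x,y) ∈ E × Y with x − Ω y ∈ X, one has u(g)x − Ω(v(g)y) ∈ X and ‖u(g)x − Ω(v(g)y)‖ + ‖v(g)y‖ ≤ C'(‖x − Ω y‖ + ‖y‖) (i.e. the diagonal maps (x,y) ↦ (u(g)x, v(g)y) are uniformly bounded for the twisted-sum quasi-norm). -/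
/-- For a semigroup `G` acting boundedly on Banach spaces `E` and `Y`
(with a closed invariant subspace `X ⊆ E`) and any map `Ω : Y → E`, being a
`G`-centralizer is equivalent to the uniform boundedness of the diagonal actions
on the twisted sum. -/
theorem stmt_0 {G : Type*} [Semigroup G]
    {E Y : Type*} [NormedAddCommGroup E] [NormedSpace ℝ E] [CompleteSpace E]
    [NormedAddCommGroup Y] [NormedSpace ℝ Y] [CompleteSpace Y]
    (u : G → E →L[ℝ] E) (v : G → Y →L[ℝ] Y)
    (hu : ∀ g h : G, u (g * h) = (u g).comp (u h))
    (hv : ∀ g h : G, v (g * h) = (v g).comp (v h))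
    (M : ℝ) (huM : ∀ g : G, ‖u g‖ ≤ M) (hvM : ∀ g : G, ‖v g‖ ≤ M)
    (X : Submodule ℝ E) (hXc : IsClosed (X : Set E))
    (hXinv : ∀ g : G, ∀ x ∈ X, u g x ∈ X)
    (Ω : Y → E) :
    (∃ C : ℝ, 0 ≤ C ∧ ∀ (g : G) (y : Y),
        u g (Ω y) - Ω (v g y) ∈ X ∧ ‖u g (Ω y) - Ω (v g y)‖ ≤ C * ‖y‖) ↔
    (∃ C' : ℝ, 0 ≤ C' ∧ ∀ (g : G) (x : E) (y : Y), x - Ω y ∈ X →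
        u g x - Ω (v g y) ∈ X ∧
        ‖u g x - Ω (v g y)‖ + ‖v g y‖ ≤ C' * (‖x - Ω y‖ + ‖y‖)) := by
  constructor
  · rintro ⟨C, hC, hcen⟩
    set K : ℝ := max M 0 with hK
    refine ⟨C + K, by positivity, fun g x y hxy => ?_⟩
    have hdecomp : u g x - Ω (v g y) = u g (x - Ω y) + (u g (Ω y) - Ω (v g y)) := by
      rw [map_sub]; abel
    obtain ⟨hmem, hnorm⟩ := hcen g y
    constructor
    · rw [hdecomp]
      exact X.add_mem (hXinv g _ hxy) hmem
    · have h1 : ‖u g (x - Ω y)‖ ≤ K * ‖x - Ω y‖ := by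
        calc ‖u g (x - Ω y)‖ ≤ ‖u g‖ * ‖x - Ω y‖ := (u g).le_opNorm _
          _ ≤ K * ‖x - Ω y‖ := by
            apply mul_le_mul_of_nonneg_right _ (norm_nonneg _)
            exact le_trans (huM g) (le_max_left _ _)
      have h2 : ‖v g y‖ ≤ K * ‖y‖ := by
        calc ‖v g y‖ ≤ ‖v g‖ * ‖y‖ := (v g).le_opNorm _
          _ ≤ K * ‖y‖ := by
            apply mul_le_mul_of_nonneg_right _ (norm_nonneg _)
            exact le_trans (hvM g) (le_max_left _ _)
      have h3 : ‖u g x - Ω (v g y)‖ ≤ K * ‖x - Ω y‖ + C * ‖y‖ := by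
        rw [hdecomp]
        exact le_trans (norm_add_le _ _) (add_le_add h1 hnorm)
      have hKnn : 0 ≤ K := le_max_right _ _
      nlinarith [norm_nonneg (x - Ω y), norm_nonneg y]
  · rintro ⟨C', hC', hbdd⟩
    refine ⟨C', hC', fun g y => ?_⟩
    have h0 : Ω y - Ω y ∈ X := by simp
    obtain ⟨hmem, hnorm⟩ := hbdd g (Ω y) y h0
    refine ⟨hmem, ?_⟩
    have := hnorm
    simp only [sub_self, norm_zero, zero_add] at this
    linarith [norm_nonneg (v g y)]
end

section
/- Let G be an amenable group. Let E and Y be real Banach spaces with bounded representations u and v of G by invertible operators (u(g⁻¹) = u(g)⁻¹ and v(g⁻¹) = v(g)⁻¹), let X be a closed subspace of E with u(g)X ⊆ X for all g ∈ G, and assume X (with the restricted representation g ↦ u(g)|_X) is G-complemented in its bidual. Let Y₀₀ be a dense linear subspace of Y with v(g)Y₀₀ ⊆ Y₀₀ for all g, and let Ω : Y₀₀ → E be a G-centralizer: there is C with u(g)(Ωy) − Ω(v(g)y) ∈ X and ‖u(g)(Ωy) − Ω(v(g)y)‖ ≤ C‖y‖ for all g ∈ G, y ∈ Y₀₀. Then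 there exists a map ω : Y₀₀ → E which is G-equivariant (u(g)(ω y) = ω(v(g) y) for all g ∈ G, y ∈ Y₀₀), satisfies Ω y − ω y ∈ X for all y ∈ Y₀₀, and is at bounded distance from Ω: sup{‖Ω y − ω y‖ : y ∈ Y₀₀, ‖y‖ ≤ 1} < ∞. Moreover ω can be chosen linear whenever Ω is linear. -/
open NormedSpace

/-- The subspace of bounded real-valued functions on `G` (the domain `ℓ∞(G,ℝ)` of a mean). -/
def bddFuns (G : Type*) : Submodule ℝ (G → ℝ) where
  carrier := {f | ∃ C : ℝ, ∀ g, |f g| ≤ C}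
  add_mem' := by
    rintro f g ⟨C, hC⟩ ⟨D, hD⟩
    exact ⟨C + D, fun x => (abs_add_le _ _).trans (add_le_add (hC x) (hD x))⟩
  zero_mem' := ⟨0, fun g => by simp⟩
  smul_mem' := by
    rintro c f ⟨C, hC⟩
    exact ⟨|c| * C, fun x => by
      rw [Pi.smul_apply, smul_eq_mul, abs_mul]
      exact mul_le_mul_of_nonneg_left (hC x) (abs_nonneg c)⟩

/-- constant-one function -/
def oneFun (G : Type*) : bddFuns G := ⟨fun _ => 1, 1, fun g => by simp⟩

lemma mean_abs_le {G : Type*} (m : bddFuns G →ₗ[ℝ] ℝ)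
    (hm1 : ∀ f : bddFuns G, (∀ g : G, (f : G → ℝ) g = 1) → m f = 1)
    (hmpos : ∀ f : bddFuns G, (∀ g : G, 0 ≤ (f : G → ℝ) g) → 0 ≤ m f)
    (f : bddFuns G) (K : ℝ) (hK : ∀ g, |(f : G → ℝ) g| ≤ K) :
    |m f| ≤ K := by
  have h1 : m (oneFun G) = 1 := hm1 _ (fun g => rfl)
  have h2 : 0 ≤ m (K • oneFun G - f) := by
    refine hmpos _ (fun g => ?_)
    have := (abs_le.mp (hK g)).2
    have hc : ((K • oneFun G - f : bddFuns G) : G → ℝ) g = K * 1 - (f : G → ℝ) g := rfl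
    rw [hc]; linarith
  have h3 : 0 ≤ m (K • oneFun G + f) := by
    refine hmpos _ (fun g => ?_)
    have := (abs_le.mp (hK g)).1
    have hc : ((K • oneFun G + f : bddFuns G) : G → ℝ) g = K * 1 + (f : G → ℝ) g := rfl
    rw [hc]; linarith
  rw [map_sub, map_smul, h1, smul_eq_mul, mul_one] at h2
  rw [map_add, map_smul, h1, smul_eq_mul, mul_one] at h3
  rw [abs_le]; constructor <;> linarith

set_option maxHeartbeats 2000000 in
/-- if `G` is an amenable group, `X` is `G`-complemented in its bidual,
and `Ω : Y₀₀ → E` is a `G`-centralizer, then `Ω` is at bounded distance from a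
`G`-equivariant map `ω`, which can be chosen linear whenever `Ω` is linear. -/
theorem stmt_7 {G : Type*} [Group G]
    {E Y : Type*} [NormedAddCommGroup E] [NormedSpace ℝ E] [CompleteSpace E]
    [NormedAddCommGroup Y] [NormedSpace ℝ Y] [CompleteSpace Y]
    -- amenability of G: existence of a left-invariant mean on ℓ∞(G,ℝ)
    (hamen : ∃ m : bddFuns G →ₗ[ℝ] ℝ,
      (∀ f : bddFuns G, (∀ g : G, (f : G → ℝ) g = 1) → m f = 1) ∧
      (∀ f : bddFuns G, (∀ g : G, 0 ≤ (f : G → ℝ) g) → 0 ≤ m f) ∧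
      (∀ (g₀ : G) (f f' : bddFuns G),
        (∀ g : G, (f' : G → ℝ) g = (f : G → ℝ) (g₀ * g)) → m f' = m f))
    -- bounded representations by invertible operators
    (u : G → E →L[ℝ] E) (v : G → Y →L[ℝ] Y)
    (hu : ∀ g h : G, u (g * h) = (u g).comp (u h))
    (hv : ∀ g h : G, v (g * h) = (v g).comp (v h))
    (huinv : ∀ g : G, (u g⁻¹).comp (u g) = ContinuousLinearMap.id ℝ E)
    (huinv' : ∀ g : G, (u g).comp (u g⁻¹) = ContinuousLinearMap.id ℝ E)
    (hvinv : ∀ g : G, (v g⁻¹).comp (v g) = ContinuousLinearMap.id ℝ Y)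
    (hvinv' : ∀ g : G, (v g).comp (v g⁻¹) = ContinuousLinearMap.id ℝ Y)
    (Mu : ℝ) (huM : ∀ g : G, ‖u g‖ ≤ Mu) (Mv : ℝ) (hvM : ∀ g : G, ‖v g‖ ≤ Mv)
    -- the closed invariant subspace X of E
    (X : Submodule ℝ E) (hXc : IsClosed (X : Set E))
    (hXinv : ∀ g : G, ∀ x ∈ X, u g x ∈ X)
    -- X (with the restricted representation) is G-complemented in its bidual
    (hcompl : ∃ P : StrongDual ℝ (StrongDual ℝ ↥X) →L[ℝ] ↥X,
      (∀ x : ↥X, P (inclusionInDoubleDual ℝ ↥X x) = x) ∧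
      ∀ (g : G) (wg : ↥X →L[ℝ] ↥X), (∀ x : ↥X, (wg x : E) = u g (x : E)) →
        ∀ wgss : StrongDual ℝ (StrongDual ℝ ↥X) →L[ℝ] StrongDual ℝ (StrongDual ℝ ↥X),
          (∀ (Φ : StrongDual ℝ (StrongDual ℝ ↥X)) (φ : StrongDual ℝ ↥X), wgss Φ φ = Φ (φ.comp wg)) →
          ∀ Φ : StrongDual ℝ (StrongDual ℝ ↥X), P (wgss Φ) = wg (P Φ))
    -- the dense invariant subspace Y₀₀ of Y
    (Y₀₀ : Submodule ℝ Y) (hdense : Dense (Y₀₀ : Set Y))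
    (hYinv : ∀ g : G, ∀ y ∈ Y₀₀, v g y ∈ Y₀₀)
    -- Ω is a G-centralizer
    (Ω : ↥Y₀₀ → E) (C : ℝ)
    (hcent : ∀ (g : G) (y y' : ↥Y₀₀), (y' : Y) = v g (y : Y) →
      u g (Ω y) - Ω y' ∈ X ∧ ‖u g (Ω y) - Ω y'‖ ≤ C * ‖(y : Y)‖) :
    ∃ ω : ↥Y₀₀ → E,
      (∀ (g : G) (y y' : ↥Y₀₀), (y' : Y) = v g (y : Y) → u g (ω y) = ω y') ∧
      (∀ y : ↥Y₀₀, Ω y - ω y ∈ X) ∧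
      (∃ D : ℝ, ∀ y : ↥Y₀₀, ‖(y : Y)‖ ≤ 1 → ‖Ω y - ω y‖ ≤ D) ∧
      (IsLinearMap ℝ Ω → IsLinearMap ℝ ω) := by
  classical
  obtain ⟨m, hm1, hmpos, hminv⟩ := hamen
  obtain ⟨P, hP1, hP2⟩ := hcompl
  letI : SeminormedAddCommGroup (StrongDual ℝ ↥X) := ContinuousLinearMap.toSeminormedAddCommGroup
  letI : NormedSpace ℝ (StrongDual ℝ ↥X) := ContinuousLinearMap.toNormedSpace
  have hMv0 : 0 ≤ Mv := le_trans (norm_nonneg _) (hvM 1)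
  -- restricted representation on X
  set w : G → ↥X →L[ℝ] ↥X := fun g =>
    ContinuousLinearMap.codRestrict ((u g).comp X.subtypeL) X
      (fun x => hXinv g x x.2) with hwdef
  have hw : ∀ (g : G) (x : ↥X), ((w g x : E)) = u g (x : E) := fun g x => rfl
  -- double adjoint of w g
  set wss : G → StrongDual ℝ (StrongDual ℝ ↥X) →L[ℝ] StrongDual ℝ (StrongDual ℝ ↥X) := fun g =>
    (ContinuousLinearMap.compL ℝ (StrongDual ℝ ↥X) (StrongDual ℝ ↥X) ℝ).flip
      ((ContinuousLinearMap.compL ℝ ↥X ↥X ℝ).flip (w g)) with hwssdef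
  have hwss : ∀ (g : G) (Φ : StrongDual ℝ (StrongDual ℝ ↥X)) (φ : StrongDual ℝ ↥X),
      wss g Φ φ = Φ (φ.comp (w g)) := fun g Φ φ => rfl
  -- restriction of v to Y₀₀
  set vres : G → ↥Y₀₀ → ↥Y₀₀ := fun g y => ⟨v g y, hYinv g y y.2⟩ with hvresdef
  have hvres : ∀ (g : G) (y : ↥Y₀₀), ((vres g y : Y)) = v g (y : Y) := fun g y => rfl
  have hvv : ∀ (g : G) (y : ↥Y₀₀), (y : Y) = v g ((vres g⁻¹ y : ↥Y₀₀) : Y) := by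
    intro g y
    have := congrArg (fun T : Y →L[ℝ] Y => T (y : Y)) (hvinv' g)
    simpa using this.symm
  -- the X-valued function to be averaged
  have hxmem : ∀ (g : G) (y : ↥Y₀₀), u g (Ω (vres g⁻¹ y)) - Ω y ∈ X :=
    fun g y => (hcent g (vres g⁻¹ y) y (hvv g y)).1
  set x : ↥Y₀₀ → G → ↥X := fun y g => ⟨u g (Ω (vres g⁻¹ y)) - Ω y, hxmem g y⟩ with hxdef
  have hxbound : ∀ (y : ↥Y₀₀) (g : G), ‖x y g‖ ≤ |C| * Mv * ‖(y : Y)‖ := by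
    intro y g
    have h1 := (hcent g (vres g⁻¹ y) y (hvv g y)).2
    have h2 : ‖((vres g⁻¹ y : ↥Y₀₀) : Y)‖ ≤ Mv * ‖(y : Y)‖ := by
      rw [hvres]
      exact le_trans ((v g⁻¹).le_opNorm _)
        (mul_le_mul_of_nonneg_right (hvM _) (norm_nonneg _))
    have hnx : ‖x y g‖ = ‖u g (Ω (vres g⁻¹ y)) - Ω y‖ := rfl
    rw [hnx]
    calc ‖u g (Ω (vres g⁻¹ y)) - Ω y‖ ≤ C * ‖((vres g⁻¹ y : ↥Y₀₀) : Y)‖ := h1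
      _ ≤ |C| * ‖((vres g⁻¹ y : ↥Y₀₀) : Y)‖ :=
          mul_le_mul_of_nonneg_right (le_abs_self C) (norm_nonneg _)
      _ ≤ |C| * (Mv * ‖(y : Y)‖) := mul_le_mul_of_nonneg_left h2 (abs_nonneg C)
      _ = |C| * Mv * ‖(y : Y)‖ := by ring
  -- the bounded function g ↦ φ (x y g)
  set ffun : ↥Y₀₀ → StrongDual ℝ ↥X → bddFuns G := fun y φ =>
    ⟨fun g => φ (x y g), ‖φ‖ * (|C| * Mv * ‖(y : Y)‖), fun g =>
      le_trans (φ.le_opNorm _) (mul_le_mul_of_nonneg_left (hxbound y g) (norm_nonneg φ))⟩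
    with hffundef
  have hffun : ∀ (y : ↥Y₀₀) (φ : StrongDual ℝ ↥X) (g : G),
      ((ffun y φ : bddFuns G) : G → ℝ) g = φ (x y g) := fun y φ g => rfl
  -- the averaged bidual element
  set Φf : ↥Y₀₀ → StrongDual ℝ (StrongDual ℝ ↥X) := fun y =>
    LinearMap.mkContinuous
      { toFun := fun φ => m (ffun y φ)
        map_add' := fun φ ψ => by
          have h : ffun y (φ + ψ) = ffun y φ + ffun y ψ := by
            apply Subtype.ext
            funext g
            show (φ + ψ) (x y g) = φ (x y g) + ψ (x y g)
            simp
          show m (ffun y (φ + ψ)) = m (ffun y φ) + m (ffun y ψ)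
          rw [h, map_add]
        map_smul' := fun c φ => by
          have h : ffun y (c • φ) = c • ffun y φ := by
            apply Subtype.ext
            funext g
            show (c • φ) (x y g) = c • (φ (x y g))
            simp
          show m (ffun y (c • φ)) = c • m (ffun y φ)
          rw [h, map_smul] }
      (|C| * Mv * ‖(y : Y)‖)
      (fun φ => by
        have hb : ∀ g : G, |((ffun y φ : bddFuns G) : G → ℝ) g| ≤ ‖φ‖ * (|C| * Mv * ‖(y : Y)‖) :=
          fun g => le_trans (φ.le_opNorm _)
            (mul_le_mul_of_nonneg_left (hxbound y g) (norm_nonneg φ))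
        have := mean_abs_le m hm1 hmpos (ffun y φ) _ hb
        calc ‖m (ffun y φ)‖ = |m (ffun y φ)| := rfl
          _ ≤ ‖φ‖ * (|C| * Mv * ‖(y : Y)‖) := this
          _ = |C| * Mv * ‖(y : Y)‖ * ‖φ‖ := by ring) with hΦfdef
  have hΦfapp : ∀ (y : ↥Y₀₀) (φ : StrongDual ℝ ↥X), Φf y φ = m (ffun y φ) := fun y φ => rfl
  have hΦfnorm : ∀ y : ↥Y₀₀, ‖Φf y‖ ≤ |C| * Mv * ‖(y : Y)‖ := by
    intro y
    apply LinearMap.mkContinuous_norm_le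
    positivity
  -- the correction term and the equivariant map
  set ξ : ↥Y₀₀ → ↥X := fun y => P (Φf y) with hξdef
  refine ⟨fun y => Ω y + (ξ y : E), ?_, ?_, ?_, ?_⟩
  · -- equivariance
    intro g₀ y y' hy'
    have hd := hcent g₀ y y' hy'
    set d : ↥X := ⟨u g₀ (Ω y) - Ω y', hd.1⟩ with hddef
    -- pointwise identity for the averaged function
    have hpt : ∀ g : G, x y' g = w g₀ (x y (g₀⁻¹ * g)) + d := by
      intro g
      apply Subtype.ext
      have h1 : vres g⁻¹ y' = vres (g₀⁻¹ * g)⁻¹ y := by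
        apply Subtype.ext
        rw [hvres, hvres, hy', mul_inv_rev, inv_inv]
        have := congrArg (fun T : Y →L[ℝ] Y => T (y : Y)) (hv g⁻¹ g₀)
        simpa using this.symm
      have h2 : u g₀ (u (g₀⁻¹ * g) (Ω (vres (g₀⁻¹ * g)⁻¹ y))) = u g (Ω (vres (g₀⁻¹ * g)⁻¹ y)) := by
        have := congrArg (fun T : E →L[ℝ] E => T (Ω (vres (g₀⁻¹ * g)⁻¹ y))) (hu g₀ (g₀⁻¹ * g))
        simp only [ContinuousLinearMap.comp_apply] at this
        rw [← this, mul_inv_cancel_left]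
      show u g (Ω (vres g⁻¹ y')) - Ω y'
          = u g₀ (u (g₀⁻¹ * g) (Ω (vres (g₀⁻¹ * g)⁻¹ y)) - Ω y) + (u g₀ (Ω y) - Ω y')
      rw [map_sub, h2, h1]
      abel
    -- the mean-shift identity
    have key : Φf y' = wss g₀ (Φf y) + inclusionInDoubleDual ℝ ↥X d := by
      ext φ
      set shf : bddFuns G :=
        ⟨fun g => ((ffun y (φ.comp (w g₀)) : bddFuns G) : G → ℝ) (g₀⁻¹ * g),
          (ffun y (φ.comp (w g₀))).2.choose,
          fun g => (ffun y (φ.comp (w g₀))).2.choose_spec (g₀⁻¹ * g)⟩ with hshfdef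
      have hfid : ffun y' φ = shf + (φ d) • oneFun G := by
        apply Subtype.ext
        funext g
        show φ (x y' g) = (φ.comp (w g₀)) (x y (g₀⁻¹ * g)) + φ d * 1
        rw [hpt g, map_add]
        simp
      have hLHS : Φf y' φ = m (ffun y' φ) := rfl
      rw [hLHS, hfid, map_add, map_smul]
      have hshift : m shf = m (ffun y (φ.comp (w g₀))) :=
        hminv g₀⁻¹ (ffun y (φ.comp (w g₀))) shf (fun g => rfl)
      rw [hshift]
      have hone : m (oneFun G) = 1 := hm1 _ (fun g => rfl)
      show m (ffun y (φ.comp (w g₀))) + φ d • m (oneFun G)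
          = (wss g₀ (Φf y) + inclusionInDoubleDual ℝ ↥X d) φ
      rw [hone, smul_eq_mul, mul_one]
      have : (wss g₀ (Φf y) + inclusionInDoubleDual ℝ ↥X d) φ
          = Φf y (φ.comp (w g₀)) + φ d := by
        rw [ContinuousLinearMap.add_apply, hwss, dual_def]
      rw [this, hΦfapp]
    have hξeq : ξ y' = w g₀ (ξ y) + d := by
      show P (Φf y') = w g₀ (ξ y) + d
      rw [key, map_add, hP1 d]
      congr 1
      exact hP2 g₀ (w g₀) (hw g₀) (wss g₀) (hwss g₀) (Φf y)
    show u g₀ (Ω y + (ξ y : E)) = Ω y' + (ξ y' : E)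
    have hcoe : ((ξ y' : ↥X) : E) = u g₀ ((ξ y : ↥X) : E) + (u g₀ (Ω y) - Ω y') := by
      rw [hξeq]
      rfl
    rw [map_add, hcoe]
    abel
  · -- Ω y - ω y ∈ X
    intro y
    have : Ω y - (Ω y + (ξ y : E)) = -(ξ y : E) := by abel
    rw [this]
    exact X.neg_mem (ξ y).2
  · -- uniform bound
    refine ⟨‖P‖ * (|C| * Mv), fun y hy => ?_⟩
    have h1 : Ω y - (Ω y + (ξ y : E)) = -(ξ y : E) := by abel
    rw [h1, norm_neg]
    have h2 : ‖(ξ y : E)‖ = ‖ξ y‖ := rfl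
    rw [h2]
    calc ‖ξ y‖ ≤ ‖P‖ * ‖Φf y‖ := P.le_opNorm _
      _ ≤ ‖P‖ * (|C| * Mv * ‖(y : Y)‖) :=
          mul_le_mul_of_nonneg_left (hΦfnorm y) (norm_nonneg P)
      _ ≤ ‖P‖ * (|C| * Mv * 1) := by
          have : |C| * Mv * ‖(y : Y)‖ ≤ |C| * Mv * 1 := by
            apply mul_le_mul_of_nonneg_left hy
            positivity
          exact mul_le_mul_of_nonneg_left this (norm_nonneg P)
      _ = ‖P‖ * (|C| * Mv) := by ring
  · -- linearity
    intro hΩ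
    have hxadd : ∀ (y₁ y₂ : ↥Y₀₀) (g : G), x (y₁ + y₂) g = x y₁ g + x y₂ g := by
      intro y₁ y₂ g
      apply Subtype.ext
      have hvadd : vres g⁻¹ (y₁ + y₂) = vres g⁻¹ y₁ + vres g⁻¹ y₂ := by
        apply Subtype.ext
        show v g⁻¹ ((y₁ : Y) + (y₂ : Y)) = v g⁻¹ (y₁ : Y) + v g⁻¹ (y₂ : Y)
        rw [map_add]
      show u g (Ω (vres g⁻¹ (y₁ + y₂))) - Ω (y₁ + y₂)
          = (u g (Ω (vres g⁻¹ y₁)) - Ω y₁) + (u g (Ω (vres g⁻¹ y₂)) - Ω y₂)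
      rw [hvadd, hΩ.map_add, hΩ.map_add, map_add]
      abel
    have hxsmul : ∀ (c : ℝ) (y : ↥Y₀₀) (g : G), x (c • y) g = c • x y g := by
      intro c y g
      apply Subtype.ext
      have hvsmul : vres g⁻¹ (c • y) = c • vres g⁻¹ y := by
        apply Subtype.ext
        show v g⁻¹ (c • (y : Y)) = c • v g⁻¹ (y : Y)
        rw [map_smul]
      show u g (Ω (vres g⁻¹ (c • y))) - Ω (c • y)
          = c • (u g (Ω (vres g⁻¹ y)) - Ω y)
      rw [hvsmul, hΩ.map_smul, hΩ.map_smul, map_smul, smul_sub]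
    have hΦadd : ∀ y₁ y₂ : ↥Y₀₀, Φf (y₁ + y₂) = Φf y₁ + Φf y₂ := by
      intro y₁ y₂
      ext φ
      show m (ffun (y₁ + y₂) φ) = Φf y₁ φ + Φf y₂ φ
      rw [hΦfapp, hΦfapp, ← map_add]
      congr 1
      apply Subtype.ext
      funext g
      show φ (x (y₁ + y₂) g) = φ (x y₁ g) + φ (x y₂ g)
      rw [hxadd, map_add]
    have hΦsmul : ∀ (c : ℝ) (y : ↥Y₀₀), Φf (c • y) = c • Φf y := by
      intro c y
      ext φ
      show m (ffun (c • y) φ) = c • Φf y φ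
      rw [hΦfapp, ← map_smul]
      congr 1
      apply Subtype.ext
      funext g
      show φ (x (c • y) g) = c • φ (x y g)
      rw [hxsmul, map_smul]
    constructor
    · intro y₁ y₂
      have : ξ (y₁ + y₂) = ξ y₁ + ξ y₂ := by
        show P (Φf (y₁ + y₂)) = P (Φf y₁) + P (Φf y₂)
        rw [hΦadd, map_add]
      rw [hΩ.map_add, this]
      push_cast
      abel
    · intro c y
      have : ξ (c • y) = c • ξ y := by
        show P (Φf (c • y)) = c • P (Φf y)
        rw [hΦsmul, map_smul]
      rw [hΩ.map_smul, this]
      push_cast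
      rw [smul_add]
end

section
/- Let G be an amenable group. Let E and Y be real Banach spaces with bounded representations u and v of G by invertible operators, let X be a closed subspace of E with u(g)X ⊆ X for all g ∈ G, and assume X (with the restricted representation g ↦ u(g)|_X) is G-complemented in its bidual. Let Y₀₀ be a dense linear subspace of Y with v(g)Y₀₀ ⊆ Y₀₀ for all g, and let Ω : Y₀₀ → E be a trivial G-centralizer; that is, Ω satisfies the centralizer condition (there is C with u(g)(Ωy) − Ω(v(g)y) ∈ X and ‖u(g)(Ωy) − Ω(v(g)y)‖ ≤ C‖y‖ for all g, y ∈ Y₀₀) and Ω = B + L where L : Y₀₀ → E is linear and B : Y₀₀ → X satisfies sup{‖B y‖ : y ∈ Y₀₀, ‖y‖ ≤ 1} < ∞. Then Ω is boundedly equivalent to a linear G-equivariant map: there exists a linear map L' : Y₀₀ → E with u(g)(L' y) = L'(v(g) y) for all g ∈ G and y ∈ Y₀₀, such that Ω y − L' y ∈ X for all y ∈ Y₀₀ and sup{‖Ω y − L' y‖ : y ∈ Y₀₀, ‖y‖ ≤ 1} < ∞. -/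
open NormedSpace

lemma mean_const {G : Type*} (m : bddFuns G →ₗ[ℝ] ℝ)
    (hm1 : ∀ f : bddFuns G, (∀ g : G, (f : G → ℝ) g = 1) → m f = 1)
    (K : ℝ) : m (K • (⟨fun _ => 1, 1, fun _ => by norm_num⟩ : bddFuns G)) = K := by
  rw [map_smul, hm1 _ (fun g => rfl), smul_eq_mul, mul_one]

lemma mean_bound {G : Type*} (m : bddFuns G →ₗ[ℝ] ℝ)
    (hm1 : ∀ f : bddFuns G, (∀ g : G, (f : G → ℝ) g = 1) → m f = 1)
    (hm2 : ∀ f : bddFuns G, (∀ g : G, 0 ≤ (f : G → ℝ) g) → 0 ≤ m f)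
    (f : bddFuns G) (K : ℝ) (hf : ∀ g, |(f : G → ℝ) g| ≤ K) : |m f| ≤ K := by
  set one : bddFuns G := ⟨fun _ => 1, 1, fun _ => by norm_num⟩ with hone
  have h1 : 0 ≤ m (K • one - f) := by
    refine hm2 _ (fun g => ?_)
    have := abs_le.mp (hf g)
    simp only [Submodule.coe_sub, Submodule.coe_smul, hone, Pi.sub_apply, Pi.smul_apply,
      smul_eq_mul, mul_one]
    linarith [this.2]
  have h2 : 0 ≤ m (K • one + f) := by
    refine hm2 _ (fun g => ?_)
    have := abs_le.mp (hf g)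
    simp only [Submodule.coe_add, Submodule.coe_smul, hone, Pi.add_apply, Pi.smul_apply,
      smul_eq_mul, mul_one]
    linarith [this.1]
  rw [map_sub] at h1
  rw [map_add] at h2
  rw [mean_const m hm1 K] at h1 h2
  exact abs_le.mpr ⟨by linarith, by linarith⟩

set_option maxHeartbeats 2000000 in
/-- if `G` is an amenable group, `X` is `G`-complemented in its bidual,
and `Ω : Y₀₀ → E` is a trivial `G`-centralizer, then `Ω` is boundedly equivalent to
a linear `G`-equivariant map. -/
theorem stmt_8 {G : Type*} [Group G]
    {E Y : Type*} [NormedAddCommGroup E] [NormedSpace ℝ E] [CompleteSpace E]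
    [NormedAddCommGroup Y] [NormedSpace ℝ Y] [CompleteSpace Y]
    -- amenability of G: existence of a left-invariant mean on ℓ∞(G,ℝ)
    (hamen : ∃ m : bddFuns G →ₗ[ℝ] ℝ,
      (∀ f : bddFuns G, (∀ g : G, (f : G → ℝ) g = 1) → m f = 1) ∧
      (∀ f : bddFuns G, (∀ g : G, 0 ≤ (f : G → ℝ) g) → 0 ≤ m f) ∧
      (∀ (g₀ : G) (f f' : bddFuns G),
        (∀ g : G, (f' : G → ℝ) g = (f : G → ℝ) (g₀ * g)) → m f' = m f))
    -- bounded representations by invertible operators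
    (u : G → E →L[ℝ] E) (v : G → Y →L[ℝ] Y)
    (hu : ∀ g h : G, u (g * h) = (u g).comp (u h))
    (hv : ∀ g h : G, v (g * h) = (v g).comp (v h))
    (huinv : ∀ g : G, (u g⁻¹).comp (u g) = ContinuousLinearMap.id ℝ E)
    (huinv' : ∀ g : G, (u g).comp (u g⁻¹) = ContinuousLinearMap.id ℝ E)
    (hvinv : ∀ g : G, (v g⁻¹).comp (v g) = ContinuousLinearMap.id ℝ Y)
    (hvinv' : ∀ g : G, (v g).comp (v g⁻¹) = ContinuousLinearMap.id ℝ Y)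
    (Mu : ℝ) (huM : ∀ g : G, ‖u g‖ ≤ Mu) (Mv : ℝ) (hvM : ∀ g : G, ‖v g‖ ≤ Mv)
    -- the closed invariant subspace X of E
    (X : Submodule ℝ E) (hXc : IsClosed (X : Set E))
    (hXinv : ∀ g : G, ∀ x ∈ X, u g x ∈ X)
    -- X (with the restricted representation) is G-complemented in its bidual
    (hcompl : ∃ P : StrongDual ℝ (StrongDual ℝ ↥X) →L[ℝ] ↥X,
      (∀ x : ↥X, P (inclusionInDoubleDual ℝ ↥X x) = x) ∧
      ∀ (g : G) (wg : ↥X →L[ℝ] ↥X), (∀ x : ↥X, (wg x : E) = u g (x : E)) →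
        ∀ wgss : StrongDual ℝ (StrongDual ℝ ↥X) →L[ℝ] StrongDual ℝ (StrongDual ℝ ↥X),
          (∀ (Φ : StrongDual ℝ (StrongDual ℝ ↥X)) (φ : StrongDual ℝ ↥X), wgss Φ φ = Φ (φ.comp wg)) →
          ∀ Φ : StrongDual ℝ (StrongDual ℝ ↥X), P (wgss Φ) = wg (P Φ))
    -- the dense invariant subspace Y₀₀ of Y
    (Y₀₀ : Submodule ℝ Y) (hdense : Dense (Y₀₀ : Set Y))
    (hYinv : ∀ g : G, ∀ y ∈ Y₀₀, v g y ∈ Y₀₀)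
    -- Ω is a G-centralizer
    (Ω : ↥Y₀₀ → E) (C : ℝ)
    (hcent : ∀ (g : G) (y y' : ↥Y₀₀), (y' : Y) = v g (y : Y) →
      u g (Ω y) - Ω y' ∈ X ∧ ‖u g (Ω y) - Ω y'‖ ≤ C * ‖(y : Y)‖)
    -- Ω is trivial: Ω = B + L with L linear and B bounded with values in X
    (htriv : ∃ (L : ↥Y₀₀ →ₗ[ℝ] E) (Cb : ℝ), ∀ y : ↥Y₀₀,
      Ω y - L y ∈ X ∧ (‖(y : Y)‖ ≤ 1 → ‖Ω y - L y‖ ≤ Cb)) :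
    ∃ L' : ↥Y₀₀ →ₗ[ℝ] E,
      (∀ (g : G) (y y' : ↥Y₀₀), (y' : Y) = v g (y : Y) → u g (L' y) = L' y') ∧
      (∀ y : ↥Y₀₀, Ω y - L' y ∈ X) ∧
      (∃ D : ℝ, ∀ y : ↥Y₀₀, ‖(y : Y)‖ ≤ 1 → ‖Ω y - L' y‖ ≤ D) := by
  obtain ⟨m, hm1, hm2, hm3⟩ := hamen
  obtain ⟨L, Cb, hLB⟩ := htriv
  obtain ⟨P, hP1, hP2⟩ := hcompl
  letI : SeminormedAddCommGroup (StrongDual ℝ X) := inferInstance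
  letI : NormedSpace ℝ (StrongDual ℝ X) := inferInstance
  -- normalized constants
  set C' : ℝ := max C 0 with hC'
  set Mu' : ℝ := max Mu 0 with hMu'
  set Mv' : ℝ := max Mv 1 with hMv'
  set Cb' : ℝ := max Cb 0 with hCb'
  have hC'0 : 0 ≤ C' := le_max_right _ _
  have hMu'0 : 0 ≤ Mu' := le_max_right _ _
  have hMv'1 : 1 ≤ Mv' := le_max_right _ _
  have hMv'0 : 0 ≤ Mv' := by linarith
  have hCb'0 : 0 ≤ Cb' := le_max_right _ _
  -- the restricted action on Y₀₀
  have hvy : ∀ (g : G) (y : ↥Y₀₀), v g (y : Y) ∈ Y₀₀ := fun g y => hYinv g y y.2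
  set vY : G → (↥Y₀₀ →ₗ[ℝ] ↥Y₀₀) := fun g =>
    LinearMap.codRestrict Y₀₀ ((v g).toLinearMap.comp Y₀₀.subtype) (hvy g) with hvY
  have hvY_apply : ∀ (g : G) (y : ↥Y₀₀), ((vY g y : ↥Y₀₀) : Y) = v g (y : Y) := fun g y => rfl
  have hvYinv : ∀ (g : G) (y : ↥Y₀₀), ((y : ↥Y₀₀) : Y) = v g ((vY g⁻¹ y : ↥Y₀₀) : Y) := by
    intro g y
    have := ContinuousLinearMap.ext_iff.mp (hvinv' g) (y : Y)
    simpa [hvY_apply] using this.symm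
  -- the restricted action on X
  set w : G → (↥X →L[ℝ] ↥X) := fun g =>
    ContinuousLinearMap.codRestrict ((u g).comp X.subtypeL) X
      (fun x => hXinv g x x.2) with hw
  have hw_apply : ∀ (g : G) (x : ↥X), ((w g x : ↥X) : E) = u g (x : E) := fun g x => rfl
  -- the linear maps Λ g : Y₀₀ → X
  have hmem : ∀ (g : G) (y : ↥Y₀₀),
      ((u g).toLinearMap.comp (L.comp (vY g⁻¹)) - L) y ∈ X := by
    intro g y
    have h1 := (hcent g (vY g⁻¹ y) y (hvYinv g y)).1
    have h2 := (hLB (vY g⁻¹ y)).1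
    have h3 := (hLB y).1
    have heq : ((u g).toLinearMap.comp (L.comp (vY g⁻¹)) - L) y
        = (u g (Ω (vY g⁻¹ y)) - Ω y) - u g (Ω (vY g⁻¹ y) - L (vY g⁻¹ y)) + (Ω y - L y) := by
      simp only [LinearMap.sub_apply, LinearMap.coe_comp, Function.comp_apply,
        ContinuousLinearMap.coe_coe, map_sub]
      abel
    rw [heq]
    exact X.add_mem (X.sub_mem h1 (hXinv g _ h2)) h3
  set Λ : G → (↥Y₀₀ →ₗ[ℝ] ↥X) := fun g =>
    LinearMap.codRestrict X ((u g).toLinearMap.comp (L.comp (vY g⁻¹)) - L) (hmem g) with hΛ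
  have hΛ_apply : ∀ (g : G) (y : ↥Y₀₀),
      ((Λ g y : ↥X) : E) = u g (L (vY g⁻¹ y)) - L y := by
    intro g y
    simp [hΛ]
  -- the raw bound
  have hraw : ∀ (g : G) (y : ↥Y₀₀), ‖(y : Y)‖ ≤ 1 → Mv' * ‖(y : Y)‖ ≤ 1 →
      ‖((Λ g y : ↥X) : E)‖ ≤ C' * Mv' * ‖(y : Y)‖ + (Mu' + 1) * Cb' := by
    intro g y h1 h2
    set z : ↥Y₀₀ := vY g⁻¹ y with hz
    have hznorm : ‖(z : Y)‖ ≤ Mv' * ‖(y : Y)‖ := by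
      calc ‖(z : Y)‖ = ‖v g⁻¹ (y : Y)‖ := by rw [hz, hvY_apply]
        _ ≤ ‖v g⁻¹‖ * ‖(y : Y)‖ := (v g⁻¹).le_opNorm _
        _ ≤ Mv' * ‖(y : Y)‖ :=
            mul_le_mul_of_nonneg_right ((hvM g⁻¹).trans (le_max_left _ _)) (norm_nonneg _)
    have hz1 : ‖(z : Y)‖ ≤ 1 := hznorm.trans h2
    have ha := (hcent g z y (hvYinv g y)).2
    have hb := (hLB z).2 hz1
    have hc := (hLB y).2 h1
    have heq : ((Λ g y : ↥X) : E)
        = (u g (Ω z) - Ω y) - u g (Ω z - L z) + (Ω y - L y) := by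
      rw [hΛ_apply, ← hz, map_sub]
      abel
    have hub : ‖u g (Ω z - L z)‖ ≤ Mu' * Cb' := by
      calc ‖u g (Ω z - L z)‖ ≤ ‖u g‖ * ‖Ω z - L z‖ := (u g).le_opNorm _
        _ ≤ Mu' * Cb' := by
            refine mul_le_mul ((huM g).trans (le_max_left _ _))
              (hb.trans (le_max_left _ _)) (norm_nonneg _) hMu'0
    have hca : ‖u g (Ω z) - Ω y‖ ≤ C' * (Mv' * ‖(y : Y)‖) := by
      calc ‖u g (Ω z) - Ω y‖ ≤ C * ‖(z : Y)‖ := ha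
        _ ≤ C' * ‖(z : Y)‖ := mul_le_mul_of_nonneg_right (le_max_left _ _) (norm_nonneg _)
        _ ≤ C' * (Mv' * ‖(y : Y)‖) := mul_le_mul_of_nonneg_left hznorm hC'0
    have hcc : ‖Ω y - L y‖ ≤ Cb' := hc.trans (le_max_left _ _)
    calc ‖((Λ g y : ↥X) : E)‖
        ≤ ‖u g (Ω z) - Ω y‖ + ‖u g (Ω z - L z)‖ + ‖Ω y - L y‖ := by
          rw [heq]
          exact (norm_add_le _ _).trans (add_le_add_left (norm_sub_le _ _) _)
      _ ≤ C' * (Mv' * ‖(y : Y)‖) + Mu' * Cb' + Cb' := by linarith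
      _ = C' * Mv' * ‖(y : Y)‖ + (Mu' + 1) * Cb' := by ring
  set Kf : ↥Y₀₀ → ℝ := fun y =>
    C' * Mv' * ‖(y : Y)‖ + Mv' * (1 + ‖(y : Y)‖) * ((Mu' + 1) * Cb') with hKf
  have hKf0 : ∀ y, 0 ≤ Kf y := by
    intro y
    have h1 : (0:ℝ) ≤ ‖(y : Y)‖ := norm_nonneg _
    have : (0:ℝ) ≤ (Mu' + 1) * Cb' := by positivity
    have : (0:ℝ) ≤ Mv' * (1 + ‖(y : Y)‖) := by positivity
    simp only [hKf]
    positivity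
  have hΛbound : ∀ (g : G) (y : ↥Y₀₀), ‖((Λ g y : ↥X) : E)‖ ≤ Kf y := by
    intro g y
    have hn0 : (0:ℝ) ≤ ‖(y : Y)‖ := norm_nonneg _
    have hden : 0 < Mv' * (1 + ‖(y : Y)‖) := by nlinarith
    set t : ℝ := (Mv' * (1 + ‖(y : Y)‖))⁻¹ with ht
    have ht0 : 0 < t := inv_pos.mpr hden
    have hkey : t * (Mv' * (1 + ‖(y : Y)‖)) = 1 := inv_mul_cancel₀ hden.ne'
    have hty : ‖((t • y : ↥Y₀₀) : Y)‖ = t * ‖(y : Y)‖ := by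
      rw [Submodule.coe_smul, norm_smul, Real.norm_eq_abs, abs_of_pos ht0]
    have hfrac : Mv' * (t * ‖(y : Y)‖) ≤ 1 := by nlinarith [hkey, ht0.le, hMv'0, hn0]
    have hty1 : ‖((t • y : ↥Y₀₀) : Y)‖ ≤ 1 := by
      rw [hty]
      nlinarith [hfrac, ht0.le, hMv'1, hn0, mul_nonneg ht0.le hn0]
    have hMvt : Mv' * ‖((t • y : ↥Y₀₀) : Y)‖ ≤ 1 := by rw [hty]; exact hfrac
    have hr := hraw g (t • y) hty1 hMvt
    rw [hty] at hr
    have hsm : ((Λ g (t • y) : ↥X) : E) = t • ((Λ g y : ↥X) : E) := by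
      rw [map_smul]; rfl
    rw [hsm, norm_smul, Real.norm_eq_abs, abs_of_pos ht0] at hr
    -- multiply through by t⁻¹
    rw [← mul_le_mul_iff_right₀ ht0]
    calc t * ‖((Λ g y : ↥X) : E)‖
        ≤ C' * Mv' * (t * ‖(y : Y)‖) + (Mu' + 1) * Cb' := hr
      _ = t * Kf y := by
          simp only [hKf]
          linear_combination (-((Mu' + 1) * Cb')) * hkey
  -- the bounded functions g ↦ φ (Λ g y)
  have hbddmem : ∀ (y : ↥Y₀₀) (φ : StrongDual ℝ ↥X), (fun g => φ (Λ g y)) ∈ bddFuns G := by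
    intro y φ
    refine ⟨‖φ‖ * Kf y, fun g => ?_⟩
    calc |φ (Λ g y)| ≤ ‖φ‖ * ‖Λ g y‖ := φ.le_opNorm _
      _ ≤ ‖φ‖ * Kf y := by
          refine mul_le_mul_of_nonneg_left ?_ (norm_nonneg _)
          exact hΛbound g y
  set fΛ : ↥Y₀₀ → StrongDual ℝ ↥X → bddFuns G := fun y φ => ⟨fun g => φ (Λ g y), hbddmem y φ⟩
    with hfΛ
  -- Φ y : X**
  have hTbound : ∀ (y : ↥Y₀₀) (φ : StrongDual ℝ ↥X), ‖m (fΛ y φ)‖ ≤ Kf y * ‖φ‖ := by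
    intro y φ
    rw [Real.norm_eq_abs, mul_comm]
    refine mean_bound m hm1 hm2 _ _ (fun g => ?_)
    calc |φ (Λ g y)| ≤ ‖φ‖ * ‖Λ g y‖ := φ.le_opNorm _
      _ ≤ ‖φ‖ * Kf y := mul_le_mul_of_nonneg_left (hΛbound g y) (norm_nonneg _)
  set T : ↥Y₀₀ → (StrongDual ℝ ↥X →ₗ[ℝ] ℝ) := fun y =>
    { toFun := fun φ => m (fΛ y φ)
      map_add' := by
        intro φ ψ
        show m (fΛ y (φ + ψ)) = m (fΛ y φ) + m (fΛ y ψ)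
        have h : fΛ y (φ + ψ) = fΛ y φ + fΛ y ψ := Subtype.ext (funext fun g => rfl)
        rw [h, map_add]
      map_smul' := by
        intro c φ
        show m (fΛ y (c • φ)) = (RingHom.id ℝ) c • m (fΛ y φ)
        have h : fΛ y (c • φ) = c • fΛ y φ := Subtype.ext (funext fun g => rfl)
        rw [h, map_smul, RingHom.id_apply] } with hT
  set Φ : ↥Y₀₀ →ₗ[ℝ] StrongDual ℝ (StrongDual ℝ ↥X) :=
    { toFun := fun y => LinearMap.mkContinuous (T y) (Kf y) (hTbound y)
      map_add' := by
        intro y z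
        refine ContinuousLinearMap.ext fun φ => ?_
        show m (fΛ (y + z) φ) = m (fΛ y φ) + m (fΛ z φ)
        rw [← map_add]
        congr 1
        refine Subtype.ext (funext fun g => ?_)
        simp [hfΛ]
      map_smul' := by
        intro c y
        refine ContinuousLinearMap.ext fun φ => ?_
        show m (fΛ (c • y) φ) = c • m (fΛ y φ)
        rw [← map_smul]
        congr 1
        refine Subtype.ext (funext fun g => ?_)
        simp [hfΛ] } with hΦ
  have hΦ_apply : ∀ (y : ↥Y₀₀) (φ : StrongDual ℝ ↥X), Φ y φ = m (fΛ y φ) := fun y φ => rfl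
  have hΦnorm : ∀ y : ↥Y₀₀, ‖Φ y‖ ≤ Kf y := fun y =>
    LinearMap.mkContinuous_norm_le (T y) (hKf0 y) (hTbound y)
  -- the final linear map
  set L' : ↥Y₀₀ →ₗ[ℝ] E := L + X.subtype.comp ((P : StrongDual ℝ (StrongDual ℝ ↥X) →ₗ[ℝ] ↥X).comp Φ)
    with hL'
  have hL'_apply : ∀ y : ↥Y₀₀, L' y = L y + ((P (Φ y) : ↥X) : E) := fun y => rfl
  have hone : ∀ g : G, ((⟨fun _ => 1, 1, fun _ => by norm_num⟩ : bddFuns G) : G → ℝ) g = 1 :=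
    fun _ => rfl
  set one : bddFuns G := ⟨fun _ => 1, 1, fun _ => by norm_num⟩ with honedef
  have hmone : m one = 1 := hm1 one hone
  refine ⟨L', ?_, ?_, ?_⟩
  · intro h y y' hy'
    have hyy : vY h⁻¹ y' = y := by
      refine Subtype.ext ?_
      have h2 := ContinuousLinearMap.ext_iff.mp (hvinv h) (y : Y)
      rw [hvY_apply, hy']
      simpa using h2
    have hxi : ((Λ h y' : ↥X) : E) = u h (L y) - L y' := by rw [hΛ_apply, hyy]
    set ξ : ↥X := Λ h y' with hξ
    have hkey : ∀ g : G, (Λ g y' : ↥X) = w h (Λ (h⁻¹ * g) y) + ξ := by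
      intro g
      refine Subtype.ext ?_
      show ((Λ g y' : ↥X) : E) = ((w h (Λ (h⁻¹ * g) y) : ↥X) : E) + ((ξ : ↥X) : E)
      rw [hw_apply, hΛ_apply, hΛ_apply, hξ, hxi]
      have harg : vY (h⁻¹ * g)⁻¹ y = vY g⁻¹ y' := by
        refine Subtype.ext ?_
        rw [hvY_apply, hvY_apply, hy', show (h⁻¹ * g)⁻¹ = g⁻¹ * h by group, hv g⁻¹ h]
        rfl
      rw [map_sub (u h), harg]
      have hcomp : u h (u (h⁻¹ * g) (L (vY g⁻¹ y'))) = u g (L (vY g⁻¹ y')) := by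
        rw [← ContinuousLinearMap.comp_apply, ← hu h (h⁻¹ * g), show h * (h⁻¹ * g) = g by group]
      rw [hcomp]
      abel
    -- the double-adjoint of w h
    set cR : StrongDual ℝ ↥X →L[ℝ] StrongDual ℝ ↥X :=
      (ContinuousLinearMap.compSL ↥X ↥X ℝ (RingHom.id ℝ) (RingHom.id ℝ)).flip (w h) with hcR
    set wgss : StrongDual ℝ (StrongDual ℝ ↥X) →L[ℝ] StrongDual ℝ (StrongDual ℝ ↥X) :=
      (ContinuousLinearMap.compSL (StrongDual ℝ ↥X) (StrongDual ℝ ↥X) ℝ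
        (RingHom.id ℝ) (RingHom.id ℝ)).flip cR with hwgss
    have hwgss_apply : ∀ (Ψ : StrongDual ℝ (StrongDual ℝ ↥X)) (φ : StrongDual ℝ ↥X),
        wgss Ψ φ = Ψ (φ.comp (w h)) := fun Ψ φ => rfl
    have hPcomm := hP2 h (w h) (fun x => rfl) wgss hwgss_apply
    -- the key identity on the double dual
    have hΦeq : Φ y' = wgss (Φ y) + inclusionInDoubleDual ℝ ↥X ξ := by
      refine ContinuousLinearMap.ext fun φ => ?_
      have hF'mem : (fun g => (φ.comp (w h)) (Λ (h⁻¹ * g) y)) ∈ bddFuns G := by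
        refine ⟨‖φ.comp (w h)‖ * Kf y, fun g => ?_⟩
        calc |(φ.comp (w h)) (Λ (h⁻¹ * g) y)|
            ≤ ‖φ.comp (w h)‖ * ‖Λ (h⁻¹ * g) y‖ := (φ.comp (w h)).le_opNorm _
          _ ≤ ‖φ.comp (w h)‖ * Kf y := by
              have hnn : (0:ℝ) ≤ ‖φ.comp (w h)‖ := norm_nonneg (φ.comp (w h))
              refine mul_le_mul_of_nonneg_left ?_ hnn
              exact hΛbound (h⁻¹ * g) y
      set F' : bddFuns G := ⟨fun g => (φ.comp (w h)) (Λ (h⁻¹ * g) y), hF'mem⟩ with hF'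
      have hsplit : fΛ y' φ = F' + (φ ξ) • one := by
        refine Subtype.ext (funext fun g => ?_)
        show φ (Λ g y') = (φ.comp (w h)) (Λ (h⁻¹ * g) y) + (φ ξ) * 1
        rw [mul_one, hkey g, map_add]
        rfl
      have hinv : m F' = m (fΛ y (φ.comp (w h))) :=
        hm3 h⁻¹ (fΛ y (φ.comp (w h))) F' (fun g => rfl)
      show m (fΛ y' φ) = wgss (Φ y) φ + (inclusionInDoubleDual ℝ ↥X ξ) φ
      rw [hsplit, map_add, map_smul, hinv, hmone, hwgss_apply, dual_def]
      rw [hΦ_apply]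
      simp
    have hPy' : P (Φ y') = w h (P (Φ y)) + ξ := by
      rw [hΦeq, map_add, hPcomm (Φ y), hP1]
    rw [hL'_apply, hL'_apply, hPy']
    have hcoe : ((w h (P (Φ y)) + ξ : ↥X) : E)
        = u h ((P (Φ y) : ↥X) : E) + (u h (L y) - L y') := by
      rw [Submodule.coe_add, hw_apply, hξ, hxi]
    rw [hcoe, map_add]
    abel
  · intro y
    have : Ω y - L' y = (Ω y - L y) - ((P (Φ y) : ↥X) : E) := by
      rw [hL'_apply]; abel
    rw [this]
    exact X.sub_mem (hLB y).1 (P (Φ y)).2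
  · refine ⟨Cb' + ‖P‖ * (C' * Mv' + Mv' * 2 * ((Mu' + 1) * Cb')), fun y hy1 => ?_⟩
    have hsplit : Ω y - L' y = (Ω y - L y) - ((P (Φ y) : ↥X) : E) := by
      rw [hL'_apply]; abel
    have hnorm1 : ‖Ω y - L' y‖ ≤ ‖Ω y - L y‖ + ‖((P (Φ y) : ↥X) : E)‖ := by
      rw [hsplit]; exact norm_sub_le _ _
    have h2 : ‖((P (Φ y) : ↥X) : E)‖ ≤ ‖P‖ * ‖Φ y‖ := P.le_opNorm _
    have h3 : Kf y ≤ C' * Mv' + Mv' * 2 * ((Mu' + 1) * Cb') := by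
      have hn0 : (0:ℝ) ≤ ‖(y : Y)‖ := norm_nonneg _
      simp only [hKf]
      have e1 : C' * Mv' * ‖(y : Y)‖ ≤ C' * Mv' := by
        nlinarith [mul_nonneg hC'0 hMv'0, hy1]
      have e2 : Mv' * (1 + ‖(y : Y)‖) * ((Mu' + 1) * Cb')
          ≤ Mv' * 2 * ((Mu' + 1) * Cb') := by
        nlinarith [mul_nonneg hMv'0 (mul_nonneg (by linarith : (0:ℝ) ≤ Mu' + 1) hCb'0), hy1]
      linarith
    have h4 : ‖Φ y‖ ≤ C' * Mv' + Mv' * 2 * ((Mu' + 1) * Cb') := (hΦnorm y).trans h3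
    have h5 : ‖P‖ * ‖Φ y‖ ≤ ‖P‖ * (C' * Mv' + Mv' * 2 * ((Mu' + 1) * Cb')) :=
      mul_le_mul_of_nonneg_left h4 (norm_nonneg P)
    have h6 : ‖Ω y - L y‖ ≤ Cb' := ((hLB y).2 hy1).trans (le_max_left _ _)
    linarith
end

section
/- Let (S, μ) be a σ-finite measure space, 1 ≤ p < ∞, and let T f = ε·w^{1/p}·(f∘φ) be a Banach–Lamperti operator on L_p(μ) (with φ a bimeasurable bijection of S, w ≥ 0 measurable satisfying ∫ (g∘φ)·w dμ = ∫ g dμ for all measurable g ≥ 0, and |ε| = 1 a.e.). Then: (1) T is a linear isometry of L_p(μ): ‖T f‖_p = ‖f‖_p for every f ∈ L_p(μ); (2) for every f ∈ L_p(μ), the Kalton–Peck map K satisfies the commutator identity K(T f) = T̄(K f) + (1/p)·(log w)·(T f) almost everywhere, where T̄ h = ε·w^{1/p}·(h∘φ) is the extension of T to measurable functions and the last term is interpreted as 0 at points where (T f)(s) = 0 (in particular where w(s) = 0). -/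
open MeasureTheory
open scoped ENNReal

/-- The Kalton–Peck map `K f = f · log(|f| / ‖f‖_p)`, defined pointwise (with the
conventions `0·log 0 = 0` and `K 0 = 0`, automatic here since `Real.log 0 = 0`). -/
noncomputable def kaltonPeck {S : Type*} [MeasurableSpace S] (p : ℝ) (μ : Measure S)
    (f : S → ℝ) : S → ℝ :=
  fun s => f s * Real.log (|f s| / (eLpNorm f (ENNReal.ofReal p) μ).toReal)

/-- a Banach–Lamperti operator `T f = ε·w^{1/p}·(f∘φ)` is a linear
isometry of `L_p(μ)`, and the Kalton–Peck map satisfies the commutator identity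
`K(T f) = T̄(K f) + (1/p)·(log w)·(T f)` almost everywhere. -/
theorem stmt_10 {S : Type*} [MeasurableSpace S] (μ : Measure S) [SigmaFinite μ]
    (p : ℝ) (hp : 1 ≤ p)
    (φ : S ≃ᵐ S) (w : S → ℝ) (hw : Measurable w) (hw0 : ∀ s, 0 ≤ w s)
    (hpush : ∀ g : S → ℝ≥0∞, Measurable g →
      ∫⁻ s, g (φ s) * ENNReal.ofReal (w s) ∂μ = ∫⁻ s, g s ∂μ)
    (ε : S → ℝ) (hε : Measurable ε) (hε1 : ∀ᵐ s ∂μ, |ε s| = 1)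
    (f : S → ℝ) (hf : MemLp f (ENNReal.ofReal p) μ) :
    MemLp (fun s => ε s * w s ^ (1 / p) * f (φ s)) (ENNReal.ofReal p) μ ∧
    eLpNorm (fun s => ε s * w s ^ (1 / p) * f (φ s)) (ENNReal.ofReal p) μ
      = eLpNorm f (ENNReal.ofReal p) μ ∧
    (∀ᵐ s ∂μ,
      kaltonPeck p μ (fun t => ε t * w t ^ (1 / p) * f (φ t)) s
        = ε s * w s ^ (1 / p) * kaltonPeck p μ f (φ s)
          + (if ε s * w s ^ (1 / p) * f (φ s) = 0 then 0
             else (1 / p) * Real.log (w s) * (ε s * w s ^ (1 / p) * f (φ s)))) := by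
  have hp0 : 0 < p := lt_of_lt_of_le one_pos hp
  have hq0 : ENNReal.ofReal p ≠ 0 := (ENNReal.ofReal_pos.mpr hp0).ne'
  have hqt : ENNReal.ofReal p ≠ ⊤ := ENNReal.ofReal_ne_top
  have htp : (ENNReal.ofReal p).toReal = p := ENNReal.toReal_ofReal hp0.le
  -- null sets pull back to w-null sets
  have hnull : ∀ N : Set S, MeasurableSet N → μ N = 0 →
      ∀ᵐ s ∂μ, w s = 0 ∨ φ s ∉ N := by
    intro N hN hN0
    have h := hpush (N.indicator 1) (measurable_one.indicator hN)
    rw [lintegral_indicator_one hN, hN0] at h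
    have h2 := (lintegral_eq_zero_iff
      (((measurable_one.indicator hN).comp φ.measurable).mul hw.ennreal_ofReal)).mp h
    filter_upwards [h2] with s hs
    rcases mul_eq_zero.mp hs with h3 | h3
    · right
      intro hmem
      simp [Function.comp, Set.indicator_of_mem hmem] at h3
    · left
      have := ENNReal.ofReal_eq_zero.mp h3
      exact le_antisymm this (hw0 s)
  have hae : ∀ g h : S → ℝ, g =ᵐ[μ] h →
      ∀ᵐ s ∂μ, w s = 0 ∨ g (φ s) = h (φ s) := by
    intro g h hgh
    have h1 := hnull (toMeasurable μ {x | g x ≠ h x}) (measurableSet_toMeasurable μ _)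
      (by rw [measure_toMeasurable]; exact hgh)
    filter_upwards [h1] with s hs
    rcases hs with hs | hs
    · exact Or.inl hs
    · right
      by_contra hne
      exact hs (subset_toMeasurable μ _ hne)
  obtain ⟨f', hf'meas, hff'⟩ :
      ∃ f' : S → ℝ, Measurable f' ∧ f =ᵐ[μ] f' := by
    obtain ⟨f', h1, h2⟩ := hf.aestronglyMeasurable.aemeasurable
    exact ⟨f', h1, h2⟩
  have hTT' : (fun s => ε s * w s ^ (1 / p) * f (φ s))
      =ᵐ[μ] (fun s => ε s * w s ^ (1 / p) * f' (φ s)) := by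
    filter_upwards [hae f f' hff'] with s hs
    rcases hs with h | h
    · have hz : w s ^ (1 / p) = 0 := by
        rw [h]; exact Real.zero_rpow (one_div_ne_zero hp0.ne')
      show ε s * w s ^ (1 / p) * f (φ s) = ε s * w s ^ (1 / p) * f' (φ s)
      rw [hz]; ring
    · rw [h]
  have key : ∫⁻ s, (‖ε s * w s ^ (1 / p) * f' (φ s)‖₊ : ℝ≥0∞) ^ p ∂μ
      = ∫⁻ s, (‖f' s‖₊ : ℝ≥0∞) ^ p ∂μ := by
    have h1 : ∀ᵐ s ∂μ, (‖ε s * w s ^ (1 / p) * f' (φ s)‖₊ : ℝ≥0∞) ^ p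
        = (fun t => (‖f' t‖₊ : ℝ≥0∞) ^ p) (φ s) * ENNReal.ofReal (w s) := by
      filter_upwards [hε1] with s hs
      show _ = (‖f' (φ s)‖₊ : ℝ≥0∞) ^ p * ENNReal.ofReal (w s)
      rw [← show ∀ x : ℝ, ENNReal.ofReal ‖x‖ = (‖x‖₊ : ℝ≥0∞) from fun x => ofReal_norm x,
        ← show ∀ x : ℝ, ENNReal.ofReal ‖x‖ = (‖x‖₊ : ℝ≥0∞) from fun x => ofReal_norm x,
        ENNReal.ofReal_rpow_of_nonneg (norm_nonneg _) hp0.le,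
        ENNReal.ofReal_rpow_of_nonneg (norm_nonneg _) hp0.le,
        ← ENNReal.ofReal_mul (by positivity)]
      congr 1
      have hwp : (0:ℝ) ≤ w s ^ (1 / p) := Real.rpow_nonneg (hw0 s) _
      rw [Real.norm_eq_abs, Real.norm_eq_abs, abs_mul, abs_mul, hs, one_mul,
        abs_of_nonneg hwp, Real.mul_rpow hwp (abs_nonneg _),
        ← Real.rpow_mul (hw0 s), one_div_mul_cancel hp0.ne', Real.rpow_one]
      ring
    rw [lintegral_congr_ae h1]
    exact hpush _ ((hf'meas.nnnorm.coe_nnreal_ennreal).pow_const p)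
  have heq : eLpNorm (fun s => ε s * w s ^ (1 / p) * f (φ s)) (ENNReal.ofReal p) μ
      = eLpNorm f (ENNReal.ofReal p) μ := by
    rw [eLpNorm_congr_ae hTT', eLpNorm_congr_ae hff',
      eLpNorm_eq_lintegral_rpow_enorm_toReal hq0 hqt, eLpNorm_eq_lintegral_rpow_enorm_toReal hq0 hqt,
      htp]
    exact congrArg (fun x => x ^ (1 / p)) key
  have hT'meas : Measurable (fun s => ε s * w s ^ (1 / p) * f' (φ s)) := by
    have : Measurable fun s => w s ^ (1 / p) := by fun_prop
    exact (hε.mul this).mul (hf'meas.comp φ.measurable)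
  have hmem : MemLp (fun s => ε s * w s ^ (1 / p) * f (φ s)) (ENNReal.ofReal p) μ :=
    ⟨hT'meas.aestronglyMeasurable.congr hTT'.symm, by rw [heq]; exact hf.2⟩
  refine ⟨hmem, heq, ?_⟩
  by_cases hc : eLpNorm f (ENNReal.ofReal p) μ = 0
  · have hf0 : f =ᵐ[μ] 0 := (eLpNorm_eq_zero_iff hf.aestronglyMeasurable hq0).mp hc
    filter_upwards [hae f 0 hf0] with s hs
    rcases hs with h | h
    · have hz : w s ^ (1 / p) = 0 := by
        rw [h]; exact Real.zero_rpow (one_div_ne_zero hp0.ne')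
      simp only [kaltonPeck]
      rw [hz]
      simp
    · simp only [Pi.zero_apply] at h
      simp [kaltonPeck, h]
  · have hc0 : 0 < (eLpNorm f (ENNReal.ofReal p) μ).toReal :=
      ENNReal.toReal_pos hc hf.2.ne
    filter_upwards [hε1] with s hs
    simp only [kaltonPeck, heq]
    by_cases hw0s : w s = 0
    · have hz : w s ^ (1 / p) = 0 := by
        rw [hw0s]; exact Real.zero_rpow (one_div_ne_zero hp0.ne')
      rw [hz]
      simp
    by_cases hfs : f (φ s) = 0
    · simp [hfs]
    · have hwpos : 0 < w s := (hw0 s).lt_of_ne (Ne.symm hw0s)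
      have hεs : ε s ≠ 0 := by intro h; rw [h] at hs; simp at hs
      have hwp : 0 < w s ^ (1 / p) := Real.rpow_pos_of_pos hwpos _
      have hT : ε s * w s ^ (1 / p) * f (φ s) ≠ 0 :=
        mul_ne_zero (mul_ne_zero hεs hwp.ne') hfs
      rw [if_neg hT]
      have habs : |ε s * w s ^ (1 / p) * f (φ s)| = w s ^ (1 / p) * |f (φ s)| := by
        rw [abs_mul, abs_mul, hs, one_mul, abs_of_pos hwp]
      rw [habs, mul_div_assoc,
        Real.log_mul hwp.ne' (div_ne_zero (abs_ne_zero.mpr hfs) hc0.ne'),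
        Real.log_rpow hwpos]
      ring
end

section
/- For every 1 ≤ p < ∞, the Kalton–Peck map K on L_p(0,1) is not a centralizer for the group of surjective linear isometries of L_p(0,1): for every constant C > 0 there exist a surjective linear isometry T of L_p(0,1) and a function f ∈ L_p(0,1) with ‖f‖_p = 1 such that K f ∈ L_p(0,1), K(T f) ∈ L_p(0,1), and ‖K(T f) − T(K f)‖_p > C. -/
open MeasureTheory Set Real
open scoped ENNReal

/-- The Kalton–Peck map applied to an element of `L_p`:
`K f = f · log(|f| / ‖f‖_p)`, defined pointwise on (a representative of) `f`. -/
noncomputable def kaltonPeckLp {α : Type*} [MeasurableSpace α] {μ : Measure α}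
    {P : ENNReal} (f : Lp ℝ P μ) : α → ℝ :=
  fun s => f s * Real.log (|f s| / ‖f‖)

namespace Stmt11Aux

noncomputable section

/-- the base measure: Lebesgue on `(0,1)` -/
def μ01 : Measure ℝ := volume.restrict (Set.Ioo (0:ℝ) 1)

/-- piecewise affine self-bijection of `(0,1)` sending `(0,a)` to `(0,b)` affinely and
`[a,1)` to `[b,1)` affinely. -/
def psiab (a b x : ℝ) : ℝ := if x < a then (b/a)*x else b + ((1-b)/(1-a))*(x-a)

/-- the weight making the composition operator an isometry of `L_p` -/
def wab (p a b x : ℝ) : ℝ := if x < a then (b/a)^(1/p) else ((1-b)/(1-a))^(1/p)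

/-- weighted composition operator (pointwise) -/
def Gab (p a b : ℝ) (f : ℝ → ℝ) (x : ℝ) : ℝ := wab p a b x * f (psiab a b x)

lemma measurable_psiab (a b : ℝ) : Measurable (psiab a b) := by
  unfold psiab
  exact Measurable.ite measurableSet_Iio (measurable_const.mul measurable_id)
    ((measurable_const.mul (measurable_id.sub measurable_const)).const_add b)

lemma measurable_wab (p a b : ℝ) : Measurable (wab p a b) := by
  unfold wab
  exact Measurable.ite measurableSet_Iio measurable_const measurable_const

lemma Gab_Gab {p a b : ℝ} (hp : p ≠ 0) (ha : a ∈ Ioo (0:ℝ) 1) (hb : b ∈ Ioo (0:ℝ) 1)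
    (f : ℝ → ℝ) (x : ℝ) : Gab p b a (Gab p a b f) x = f x := by
  obtain ⟨ha0, ha1⟩ := ha
  obtain ⟨hb0, hb1⟩ := hb
  have hab : 0 < a/b := div_pos ha0 hb0
  have hba : 0 < b/a := div_pos hb0 ha0
  have h1a : (0:ℝ) < 1 - a := by linarith
  have h1b : (0:ℝ) < 1 - b := by linarith
  have hc : 0 < (1-a)/(1-b) := div_pos h1a h1b
  have hc' : 0 < (1-b)/(1-a) := div_pos h1b h1a
  unfold Gab wab psiab
  by_cases hx : x < b
  · have h2 : a / b * x < a := by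
      have := mul_lt_mul_of_pos_left hx hab
      calc a/b*x < a/b*b := this
        _ = a := by field_simp
    rw [if_pos hx, if_pos hx, if_pos h2, if_pos h2, ← mul_assoc,
      ← Real.mul_rpow hab.le hba.le]
    have h3 : a/b * (b/a) = 1 := by field_simp
    have h4 : b / a * (a / b * x) = x := by field_simp
    rw [h3, Real.one_rpow, one_mul, h4]
  · have h2 : ¬ (a + (1-a)/(1-b) * (x - b) < a) := by
      push_neg at hx ⊢
      nlinarith [mul_nonneg hc.le (sub_nonneg.mpr hx)]
    rw [if_neg hx, if_neg hx, if_neg h2, if_neg h2, ← mul_assoc,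
      ← Real.mul_rpow hc.le hc'.le]
    have h3 : (1-a)/(1-b) * ((1-b)/(1-a)) = 1 := by field_simp
    have h4 : b + (1 - b) / (1 - a) * (a + (1 - a) / (1 - b) * (x - b) - a) = x := by
      field_simp; ring
    rw [h3, Real.one_rpow, one_mul, h4]

lemma map_Ioo {a b : ℝ} (ha : a ∈ Ioo (0:ℝ) 1) (hb : b ∈ Ioo (0:ℝ) 1) :
    Measure.map (psiab a b) (volume.restrict (Ioo 0 a)) =
      ENNReal.ofReal (a/b) • volume.restrict (Ioo (0:ℝ) b) := by
  obtain ⟨ha0, ha1⟩ := ha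
  obtain ⟨hb0, hb1⟩ := hb
  have hba : 0 < b/a := div_pos hb0 ha0
  have hcong : psiab a b =ᵐ[volume.restrict (Ioo 0 a)] fun x => (b/a) * x := by
    filter_upwards [ae_restrict_mem measurableSet_Ioo] with x hx
    exact if_pos hx.2
  rw [Measure.map_congr hcong]
  have hpre : (fun x => (b/a) * x) ⁻¹' (Ioo (0:ℝ) b) = Ioo 0 a := by
    ext x
    simp only [Set.mem_preimage, Set.mem_Ioo]
    constructor
    · rintro ⟨h1, h2⟩
      constructor
      · by_contra h
        push_neg at h
        nlinarith [mul_nonneg hba.le (neg_nonneg.mpr h)]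
      · by_contra h
        push_neg at h
        have : b / a * a ≤ b / a * x := mul_le_mul_of_nonneg_left h hba.le
        rw [div_mul_cancel₀ _ ha0.ne'] at this
        linarith
    · rintro ⟨h1, h2⟩
      refine ⟨mul_pos hba h1, ?_⟩
      have := mul_lt_mul_of_pos_left h2 hba
      rwa [div_mul_cancel₀ _ ha0.ne'] at this
  rw [← hpre, ← Measure.restrict_map (measurable_const_mul _) measurableSet_Ioo,
    Real.map_volume_mul_left hba.ne', Measure.restrict_smul]
  congr 2
  rw [abs_of_pos (inv_pos.mpr hba)]
  field_simp

lemma map_Ico {a b : ℝ} (ha : a ∈ Ioo (0:ℝ) 1) (hb : b ∈ Ioo (0:ℝ) 1) :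
    Measure.map (psiab a b) (volume.restrict (Ico a 1)) =
      ENNReal.ofReal ((1-a)/(1-b)) • volume.restrict (Ico b 1) := by
  obtain ⟨ha0, ha1⟩ := ha
  obtain ⟨hb0, hb1⟩ := hb
  have h1a : (0:ℝ) < 1 - a := by linarith
  have h1b : (0:ℝ) < 1 - b := by linarith
  set c : ℝ := (1-b)/(1-a) with hc_def
  have hc : 0 < c := div_pos h1b h1a
  set d : ℝ := b - c * a with hd_def
  have hcong : psiab a b =ᵐ[volume.restrict (Ico a 1)] fun x => c * x + d := by
    filter_upwards [ae_restrict_mem measurableSet_Ico] with x hx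
    rw [psiab, if_neg (not_lt.mpr hx.1)]
    ring
  rw [Measure.map_congr hcong]
  have hpre : (fun x => c * x + d) ⁻¹' (Ico b 1) = Ico a 1 := by
    ext x
    simp only [Set.mem_preimage, Set.mem_Ico]
    constructor
    · rintro ⟨h1, h2⟩
      have h5 : c * 1 + d = 1 := by
        simp only [hd_def, hc_def]; field_simp; ring
      constructor
      · by_contra h
        push_neg at h
        have := mul_lt_mul_of_pos_left h hc
        simp only [hd_def] at h1
        linarith
      · by_contra h
        push_neg at h
        have := mul_le_mul_of_nonneg_left h hc.le
        linarith
    · rintro ⟨h1, h2⟩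
      have h3 := mul_le_mul_of_nonneg_left h1 hc.le
      have h4 := mul_lt_mul_of_pos_left h2 hc
      have h5 : c * 1 + d = 1 := by
        simp only [hd_def, hc_def]; field_simp; ring
      constructor
      · simp only [hd_def]; linarith
      · linarith
  rw [← hpre, ← Measure.restrict_map (by fun_prop) measurableSet_Ico]
  have hmm : Measure.map (fun x => c * x + d) volume
      = ENNReal.ofReal ((1-a)/(1-b)) • volume := by
    have : (fun x : ℝ => c * x + d) = (fun y : ℝ => y + d) ∘ (fun x : ℝ => c * x) := rfl
    rw [this, ← Measure.map_map (by fun_prop) (by fun_prop),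
      Real.map_volume_mul_left hc.ne', Measure.map_smul, map_add_right_eq_self]
    congr 1
    rw [abs_of_pos (inv_pos.mpr hc)]
    congr 1
    simp only [hc_def]
    field_simp
  rw [hmm, Measure.restrict_smul]

/-- the `ℝ≥0∞`-valued weight: `|ψ'|` -/
def Wab (a b x : ℝ) : ℝ≥0∞ :=
  if x < a then ENNReal.ofReal (b/a) else ENNReal.ofReal ((1-b)/(1-a))

lemma split01 {c : ℝ} (hc : c ∈ Ioo (0:ℝ) 1) :
    μ01 = volume.restrict (Ioo 0 c) + volume.restrict (Ico c 1) := by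
  rw [μ01, ← Set.Ioo_union_Ico_eq_Ioo hc.1 hc.2.le,
    Measure.restrict_union ?_ measurableSet_Ico]
  exact (Set.Iio_disjoint_Ici le_rfl).mono Set.Ioo_subset_Iio_self Set.Ico_subset_Ici_self

lemma key {a b : ℝ} (ha : a ∈ Ioo (0:ℝ) 1) (hb : b ∈ Ioo (0:ℝ) 1)
    (F : ℝ → ℝ≥0∞) (hF : AEMeasurable F μ01) :
    ∫⁻ x, Wab a b x * F (psiab a b x) ∂μ01 = ∫⁻ y, F y ∂μ01 := by
  have hane : a ≠ 0 := ne_of_gt ha.1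
  have hbne : b ≠ 0 := ne_of_gt hb.1
  have h1a : (0:ℝ) < 1 - a := by linarith [ha.2]
  have h1b : (0:ℝ) < 1 - b := by linarith [hb.2]
  have hle1 : volume.restrict (Ioo (0:ℝ) b) ≤ μ01 := by
    rw [μ01]
    exact Measure.restrict_mono (Set.Ioo_subset_Ioo le_rfl hb.2.le) le_rfl
  have hle2 : volume.restrict (Ico (b:ℝ) 1) ≤ μ01 := by
    rw [μ01]
    refine Measure.restrict_mono (fun x hx => ?_) le_rfl
    exact ⟨lt_of_lt_of_le hb.1 hx.1, hx.2⟩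
  calc ∫⁻ x, Wab a b x * F (psiab a b x) ∂μ01
      = ∫⁻ x, Wab a b x * F (psiab a b x) ∂(volume.restrict (Ioo 0 a))
        + ∫⁻ x, Wab a b x * F (psiab a b x) ∂(volume.restrict (Ico a 1)) := by
        rw [split01 ha, lintegral_add_measure]
    _ = ∫⁻ y, F y ∂(volume.restrict (Ioo 0 b)) + ∫⁻ y, F y ∂(volume.restrict (Ico b 1)) := by
        congr 1
        · have h1 : ∫⁻ x, Wab a b x * F (psiab a b x) ∂(volume.restrict (Ioo 0 a))
              = ENNReal.ofReal (b/a) * ∫⁻ x, F (psiab a b x) ∂(volume.restrict (Ioo 0 a)) := by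
            rw [← lintegral_const_mul' _ _ ENNReal.ofReal_ne_top]
            refine lintegral_congr_ae ?_
            filter_upwards [ae_restrict_mem measurableSet_Ioo] with x hx
            rw [Wab, if_pos hx.2]
          have h2 : AEMeasurable F (Measure.map (psiab a b) (volume.restrict (Ioo 0 a))) := by
            rw [map_Ioo ha hb]
            exact (hF.mono_measure hle1).smul_measure _
          rw [h1, ← lintegral_map' h2 ((measurable_psiab a b).aemeasurable), map_Ioo ha hb,
            lintegral_smul_measure, smul_eq_mul, ← mul_assoc,
            ← ENNReal.ofReal_mul (div_nonneg hb.1.le ha.1.le)]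
          have : b/a * (a/b) = 1 := by
            field_simp
          rw [this, ENNReal.ofReal_one, one_mul]
        · have h1 : ∫⁻ x, Wab a b x * F (psiab a b x) ∂(volume.restrict (Ico a 1))
              = ENNReal.ofReal ((1-b)/(1-a)) * ∫⁻ x, F (psiab a b x) ∂(volume.restrict (Ico a 1)) := by
            rw [← lintegral_const_mul' _ _ ENNReal.ofReal_ne_top]
            refine lintegral_congr_ae ?_
            filter_upwards [ae_restrict_mem measurableSet_Ico] with x hx
            rw [Wab, if_neg (not_lt.mpr hx.1)]
          have h2 : AEMeasurable F (Measure.map (psiab a b) (volume.restrict (Ico a 1))) := by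
            rw [map_Ico ha hb]
            exact (hF.mono_measure hle2).smul_measure _
          rw [h1, ← lintegral_map' h2 ((measurable_psiab a b).aemeasurable), map_Ico ha hb,
            lintegral_smul_measure, smul_eq_mul, ← mul_assoc,
            ← ENNReal.ofReal_mul (div_nonneg h1b.le h1a.le)]
          have : (1-b)/(1-a) * ((1-a)/(1-b)) = 1 := by
            field_simp
          rw [this, ENNReal.ofReal_one, one_mul]
    _ = ∫⁻ y, F y ∂μ01 := by rw [split01 hb, lintegral_add_measure]

lemma qmp {a b : ℝ} (ha : a ∈ Ioo (0:ℝ) 1) (hb : b ∈ Ioo (0:ℝ) 1) :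
    Measure.QuasiMeasurePreserving (psiab a b) μ01 μ01 := by
  refine ⟨measurable_psiab a b, ?_⟩
  refine Measure.AbsolutelyContinuous.mk fun s hs h0 => ?_
  have hμ : μ01 = volume.restrict (Ioo 0 a) + volume.restrict (Ico a 1) := split01 ha
  rw [show Measure.map (psiab a b) μ01
      = Measure.map (psiab a b) (volume.restrict (Ioo 0 a))
        + Measure.map (psiab a b) (volume.restrict (Ico a 1)) by
    rw [hμ, Measure.map_add _ _ (measurable_psiab a b)]]
  have h0' : volume (s ∩ Ioo (0:ℝ) 1) = 0 := by
    rw [μ01, Measure.restrict_apply hs] at h0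
    exact h0
  have hz : ∀ t : Set ℝ, t ⊆ Ioo (0:ℝ) 1 → volume (s ∩ t) = 0 := fun t ht =>
    measure_mono_null (Set.inter_subset_inter_right s ht) h0'
  rw [Measure.add_apply, map_Ioo ha hb, map_Ico ha hb, Measure.smul_apply,
    Measure.smul_apply, Measure.restrict_apply hs, Measure.restrict_apply hs,
    hz _ (Set.Ioo_subset_Ioo le_rfl hb.2.le),
    hz _ (fun x hx => ⟨lt_of_lt_of_le hb.1 hx.1, hx.2⟩)]
  simp

lemma enn_wab {p a b : ℝ} (hp : 0 < p) (ha : a ∈ Ioo (0:ℝ) 1) (hb : b ∈ Ioo (0:ℝ) 1)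
    (x : ℝ) : ((‖wab p a b x‖₊ : ℝ≥0∞)) ^ p = Wab a b x := by
  have h1a : (0:ℝ) < 1 - a := by linarith [ha.2]
  have h1b : (0:ℝ) < 1 - b := by linarith [hb.2]
  have key : ∀ c : ℝ, 0 ≤ c → ((‖c ^ (1/p)‖₊ : ℝ≥0∞)) ^ p = ENNReal.ofReal c := by
    intro c hc
    rw [← enorm_eq_nnnorm, Real.enorm_eq_ofReal (Real.rpow_nonneg hc _),
      ENNReal.ofReal_rpow_of_nonneg (Real.rpow_nonneg hc _) hp.le,
      ← Real.rpow_mul hc, one_div, inv_mul_cancel₀ hp.ne', Real.rpow_one]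
  rw [wab, Wab]
  by_cases hx : x < a
  · rw [if_pos hx, if_pos hx, key _ (div_nonneg hb.1.le ha.1.le)]
  · rw [if_neg hx, if_neg hx, key _ (div_nonneg h1b.le h1a.le)]

lemma eLpNorm_Gab {p a b : ℝ} (hp : 1 ≤ p) (ha : a ∈ Ioo (0:ℝ) 1) (hb : b ∈ Ioo (0:ℝ) 1)
    (f : ℝ → ℝ) (hf : AEStronglyMeasurable f μ01) :
    eLpNorm (Gab p a b f) (ENNReal.ofReal p) μ01 = eLpNorm f (ENNReal.ofReal p) μ01 := by
  have hp0 : 0 < p := lt_of_lt_of_le one_pos hp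
  have hP0 : ENNReal.ofReal p ≠ 0 := by
    simp only [ne_eq, ENNReal.ofReal_eq_zero, not_le]
    exact hp0
  have hPt : ENNReal.ofReal p ≠ ∞ := ENNReal.ofReal_ne_top
  rw [eLpNorm_eq_lintegral_rpow_enorm_toReal hP0 hPt, eLpNorm_eq_lintegral_rpow_enorm_toReal hP0 hPt,
    ENNReal.toReal_ofReal hp0.le]
  congr 1
  have hpt : ∀ x, ((‖Gab p a b f x‖₊ : ℝ≥0∞)) ^ p
      = Wab a b x * ((‖f (psiab a b x)‖₊ : ℝ≥0∞)) ^ p := by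
    intro x
    rw [Gab, nnnorm_mul, ENNReal.coe_mul, ENNReal.mul_rpow_of_nonneg _ _ hp0.le,
      enn_wab hp0 ha hb]
  refine (lintegral_congr hpt).trans ?_
  exact key ha hb _ (hf.enorm.pow_const _)

lemma memℒp_Gab {p a b : ℝ} (hp : 1 ≤ p) (ha : a ∈ Ioo (0:ℝ) 1) (hb : b ∈ Ioo (0:ℝ) 1)
    {f : ℝ → ℝ} (hf : MemLp f (ENNReal.ofReal p) μ01) :
    MemLp (Gab p a b f) (ENNReal.ofReal p) μ01 := by
  constructor
  · exact ((measurable_wab p a b).aestronglyMeasurable).mul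
      (hf.1.comp_quasiMeasurePreserving (qmp ha hb))
  · rw [eLpNorm_Gab hp ha hb f hf.1]
    exact hf.2

lemma Gab_congr {p a b : ℝ} (ha : a ∈ Ioo (0:ℝ) 1) (hb : b ∈ Ioo (0:ℝ) 1)
    {f g : ℝ → ℝ} (h : f =ᵐ[μ01] g) : Gab p a b f =ᵐ[μ01] Gab p a b g := by
  filter_upwards [(qmp ha hb).ae_eq h] with x hx
  simp only [Gab]
  rw [show f (psiab a b x) = g (psiab a b x) from hx]

variable (p : ℝ) [Fact ((1 : ℝ≥0∞) ≤ ENNReal.ofReal p)]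

/-- the weighted composition operator on `L_p` -/
def Tfun (hp : 1 ≤ p) {a b : ℝ} (ha : a ∈ Ioo (0:ℝ) 1) (hb : b ∈ Ioo (0:ℝ) 1)
    (f : Lp ℝ (ENNReal.ofReal p) μ01) : Lp ℝ (ENNReal.ofReal p) μ01 :=
  (memℒp_Gab hp ha hb (Lp.memLp f)).toLp (Gab p a b ⇑f)

lemma coeFn_Tfun (hp : 1 ≤ p) {a b : ℝ} (ha : a ∈ Ioo (0:ℝ) 1) (hb : b ∈ Ioo (0:ℝ) 1)
    (f : Lp ℝ (ENNReal.ofReal p) μ01) :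
    ⇑(Tfun p hp ha hb f) =ᵐ[μ01] Gab p a b ⇑f :=
  MemLp.coeFn_toLp _

/-- the weighted composition operator as a surjective linear isometry of `L_p` -/
def Tequiv (hp : 1 ≤ p) {a b : ℝ} (ha : a ∈ Ioo (0:ℝ) 1) (hb : b ∈ Ioo (0:ℝ) 1) :
    Lp ℝ (ENNReal.ofReal p) μ01 ≃ₗᵢ[ℝ] Lp ℝ (ENNReal.ofReal p) μ01 where
  toFun := Tfun p hp ha hb
  invFun := Tfun p hp hb ha
  map_add' f g := by
    apply Lp.ext
    refine (coeFn_Tfun p hp ha hb (f + g)).trans ?_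
    refine ((Gab_congr ha hb (Lp.coeFn_add f g)).trans ?_).trans (Lp.coeFn_add _ _).symm
    refine Filter.EventuallyEq.trans (Filter.EventuallyEq.of_eq ?_)
      (((coeFn_Tfun p hp ha hb f).symm).add ((coeFn_Tfun p hp ha hb g).symm))
    funext x
    simp only [Gab, Pi.add_apply]
    ring
  map_smul' c f := by
    apply Lp.ext
    refine (coeFn_Tfun p hp ha hb (c • f)).trans ?_
    refine ((Gab_congr ha hb (Lp.coeFn_smul c f)).trans ?_).trans (Lp.coeFn_smul c _).symm
    refine Filter.EventuallyEq.trans (Filter.EventuallyEq.of_eq ?_)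
      ((coeFn_Tfun p hp ha hb f).symm.const_smul c)
    funext x
    simp only [Gab, Pi.smul_apply, smul_eq_mul]
    ring
  left_inv f := by
    apply Lp.ext
    have hp0 : p ≠ 0 := by intro h; rw [h] at hp; linarith
    refine (coeFn_Tfun p hp hb ha _).trans ?_
    refine (Gab_congr hb ha (coeFn_Tfun p hp ha hb f)).trans ?_
    exact Filter.EventuallyEq.of_eq (funext fun x => Gab_Gab hp0 ha hb (⇑f) x)
  right_inv f := by
    apply Lp.ext
    have hp0 : p ≠ 0 := by intro h; rw [h] at hp; linarith
    refine (coeFn_Tfun p hp ha hb _).trans ?_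
    refine (Gab_congr ha hb (coeFn_Tfun p hp hb ha f)).trans ?_
    exact Filter.EventuallyEq.of_eq (funext fun x => Gab_Gab hp0 hb ha (⇑f) x)
  norm_map' f := by
    simp only [LinearEquiv.coe_mk]
    change ‖Tfun p hp ha hb f‖ = ‖f‖
    rw [Lp.norm_def, Lp.norm_def, eLpNorm_congr_ae (coeFn_Tfun p hp ha hb f),
      eLpNorm_Gab hp ha hb _ (Lp.memLp f).1]

lemma Tequiv_apply (hp : 1 ≤ p) {a b : ℝ} (ha : a ∈ Ioo (0:ℝ) 1) (hb : b ∈ Ioo (0:ℝ) 1)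
    (f : Lp ℝ (ENNReal.ofReal p) μ01) :
    Tequiv p hp ha hb f = Tfun p hp ha hb f := rfl

omit [Fact ((1 : ℝ≥0∞) ≤ ENNReal.ofReal p)] in
/-- the `L_p`-norm of the normalized indicator is 1 -/
lemma eLpNorm_ind {c : ℝ} (hp : 1 ≤ p) (hc : c ∈ Ioo (0:ℝ) 1) :
    eLpNorm (Set.indicator (Ioo (0:ℝ) c) fun _ => (c⁻¹)^(1/p)) (ENNReal.ofReal p) μ01 = 1 := by
  have hp0 : 0 < p := lt_of_lt_of_le one_pos hp
  have hP0 : ENNReal.ofReal p ≠ 0 := by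
    simp only [ne_eq, ENNReal.ofReal_eq_zero, not_le]; exact hp0
  rw [eLpNorm_indicator_const measurableSet_Ioo hP0 ENNReal.ofReal_ne_top,
    ENNReal.toReal_ofReal hp0.le]
  have hμ : μ01 (Ioo (0:ℝ) c) = ENNReal.ofReal c := by
    rw [μ01, Measure.restrict_apply measurableSet_Ioo,
      Set.inter_eq_self_of_subset_left (Set.Ioo_subset_Ioo le_rfl hc.2.le),
      Real.volume_Ioo, sub_zero]
  have hcinv : (0:ℝ) ≤ c⁻¹ := inv_nonneg.mpr hc.1.le
  rw [hμ, Real.enorm_eq_ofReal (Real.rpow_nonneg hcinv _),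
    ENNReal.ofReal_rpow_of_nonneg hc.1.le (by positivity),
    ← ENNReal.ofReal_mul (Real.rpow_nonneg hcinv _),
    ← Real.mul_rpow hcinv hc.1.le, inv_mul_cancel₀ hc.1.ne',
    Real.one_rpow, ENNReal.ofReal_one]

omit [Fact ((1 : ℝ≥0∞) ≤ ENNReal.ofReal p)] in
lemma μ01_Ioo_ne_top {c : ℝ} (hc : c ∈ Ioo (0:ℝ) 1) : μ01 (Ioo (0:ℝ) c) ≠ ∞ := by
  rw [μ01, Measure.restrict_apply measurableSet_Ioo]
  exact lt_of_le_of_lt (measure_mono (Set.inter_subset_left)) measure_Ioo_lt_top |>.ne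

omit [Fact ((1 : ℝ≥0∞) ≤ ENNReal.ofReal p)] in
/-- applying the weighted composition operator pointwise to the normalized indicator -/
lemma Gab_ind {s : ℝ} (hp : 0 < p) (hs0 : 0 < s) (hs2 : s < 1/2) :
    Gab p s (1/2) (Set.indicator (Ioo (0:ℝ) (1/2)) fun _ => (((1:ℝ)/2)⁻¹)^(1/p))
      = Set.indicator (Ioo (0:ℝ) s) fun _ => (s⁻¹)^(1/p) := by
  funext x
  have hd : (0:ℝ) < (1/2)/s := by positivity
  have h1s : (0:ℝ) < 1 - s := by linarith
  unfold Gab wab psiab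
  simp only [Set.indicator_apply, Set.mem_Ioo]
  by_cases hx : x < s
  · rw [if_pos hx, if_pos hx]
    by_cases hx0 : 0 < x
    · have hc1 : 0 < (1:ℝ)/2/s * x := by positivity
      have hc2 : (1:ℝ)/2/s * x < 1/2 := by
        have := mul_lt_mul_of_pos_left hx hd
        rwa [div_mul_cancel₀ _ hs0.ne'] at this
      rw [if_pos ⟨hc1, hc2⟩, if_pos ⟨hx0, hx⟩,
        ← Real.mul_rpow hd.le (by norm_num)]
      congr 1
      field_simp
    · have hc1 : ¬ (0 < (1:ℝ)/2/s * x ∧ (1:ℝ)/2/s * x < 1/2) := by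
        rintro ⟨h1, -⟩
        push_neg at hx0
        nlinarith [mul_nonneg hd.le (neg_nonneg.mpr hx0)]
      rw [if_neg hc1, if_neg (fun h => hx0 h.1), mul_zero]
  · have hge : ¬ ((1:ℝ)/2 + (1 - 1/2)/(1-s) * (x - s) < 1/2) := by
      push_neg at hx ⊢
      have : (0:ℝ) ≤ (1 - 1/2)/(1-s) * (x - s) := by
        apply mul_nonneg (by positivity)
        linarith
      linarith
    rw [if_neg hx, if_neg hx, if_neg (fun h => hge h.2), if_neg (fun h => hx h.2), mul_zero]

omit [Fact ((1 : ℝ≥0∞) ≤ ENNReal.ofReal p)] in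
/-- the Kalton–Peck nonlinearity acts as a scalar on normalized indicators -/
lemma kp_ind {c v : ℝ} (hv : 0 < v) (x : ℝ) :
    Set.indicator (Ioo (0:ℝ) c) (fun _ => v) x
        * Real.log (|Set.indicator (Ioo (0:ℝ) c) (fun _ => v) x| / 1)
      = (Real.log v • Set.indicator (Ioo (0:ℝ) c) fun _ => v) x := by
  simp only [Set.indicator_apply, Pi.smul_apply, smul_eq_mul, div_one]
  split_ifs with h
  · rw [abs_of_pos hv]; ring
  · simp

end

end Stmt11Aux

open Stmt11Aux

/-- for `1 ≤ p < ∞`, the Kalton–Peck map on `L_p(0,1)` is not a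
centralizer for the group of surjective linear isometries of `L_p(0,1)`: for every
`C > 0` there are a surjective linear isometry `T` and a norm-one `f` with
`K f, K(T f) ∈ L_p` and `‖K(T f) − T(K f)‖_p > C`.
(The instance `Fact (1 ≤ ENNReal.ofReal p)` is a restatement of `hp : 1 ≤ p`.) -/
theorem stmt_11 (p : ℝ) (hp : 1 ≤ p) [Fact ((1 : ENNReal) ≤ ENNReal.ofReal p)]
    (C : ℝ) (hC : 0 < C) :
    ∃ (T : Lp ℝ (ENNReal.ofReal p) (MeasureTheory.volume.restrict (Set.Ioo (0:ℝ) 1))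
          ≃ₗᵢ[ℝ] Lp ℝ (ENNReal.ofReal p) (MeasureTheory.volume.restrict (Set.Ioo (0:ℝ) 1)))
      (f : Lp ℝ (ENNReal.ofReal p) (MeasureTheory.volume.restrict (Set.Ioo (0:ℝ) 1))),
      ‖f‖ = 1 ∧
      ∃ (hf : MemLp (kaltonPeckLp f) (ENNReal.ofReal p)
              (MeasureTheory.volume.restrict (Set.Ioo (0:ℝ) 1)))
        (hTf : MemLp (kaltonPeckLp (T f)) (ENNReal.ofReal p)
              (MeasureTheory.volume.restrict (Set.Ioo (0:ℝ) 1))),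
        C < ‖hTf.toLp _ - T (hf.toLp _)‖ := by
  classical
  have hp0 : 0 < p := lt_of_lt_of_le one_pos hp
  set s : ℝ := Real.exp (-(p*C+1)) / 2 with hs_def
  have hexp1 : Real.exp (-(p*C+1)) < 1 := by
    rw [Real.exp_lt_one_iff]
    nlinarith
  have hs0 : 0 < s := by rw [hs_def]; positivity
  have hs2 : s < 1/2 := by rw [hs_def]; linarith
  have hsmem : s ∈ Set.Ioo (0:ℝ) 1 := ⟨hs0, by linarith⟩
  have hhalf : (1/2:ℝ) ∈ Set.Ioo (0:ℝ) 1 := by norm_num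
  set f₀ : ℝ → ℝ := Set.indicator (Set.Ioo (0:ℝ) (1/2)) (fun _ => (((1:ℝ)/2)⁻¹)^(1/p))
    with hf₀def
  have hf₀mem : MemLp f₀ (ENNReal.ofReal p) μ01 := by
    rw [hf₀def]
    exact memLp_indicator_const _ measurableSet_Ioo _ (Or.inr (μ01_Ioo_ne_top hhalf))
  set f : Lp ℝ (ENNReal.ofReal p) μ01 := hf₀mem.toLp f₀ with hfdef
  have hcoef : ⇑f =ᵐ[μ01] f₀ := MemLp.coeFn_toLp hf₀mem
  have hfnorm : ‖f‖ = 1 := by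
    rw [hfdef, Lp.norm_toLp, hf₀def, eLpNorm_ind p hp hhalf, ENNReal.toReal_one]
  set T := Tequiv p hp hsmem hhalf with hTdef
  set g₀ : ℝ → ℝ := Set.indicator (Set.Ioo (0:ℝ) s) (fun _ => (s⁻¹)^(1/p)) with hg₀def
  have hTfae : ⇑(T f) =ᵐ[μ01] g₀ := by
    rw [hTdef, Tequiv_apply]
    refine (coeFn_Tfun p hp hsmem hhalf f).trans ?_
    refine (Gab_congr hsmem hhalf hcoef).trans ?_
    rw [hf₀def, Gab_ind p hp0 hs0 hs2, hg₀def]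
  have hTnorm : ‖T f‖ = 1 := by rw [LinearIsometryEquiv.norm_map, hfnorm]
  have hg₀mem : MemLp g₀ (ENNReal.ofReal p) μ01 := (Lp.memLp (T f)).ae_eq hTfae
  have hKf_ae : kaltonPeckLp f =ᵐ[μ01] (Real.log ((((1:ℝ)/2)⁻¹)^(1/p))) • f₀ := by
    filter_upwards [hcoef] with x hx
    simp only [kaltonPeckLp]
    rw [hx, hfnorm, hf₀def]
    exact kp_ind (Real.rpow_pos_of_pos (by norm_num) _) x
  have hKTf_ae : kaltonPeckLp (T f) =ᵐ[μ01] (Real.log ((s⁻¹)^(1/p))) • g₀ := by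
    filter_upwards [hTfae] with x hx
    simp only [kaltonPeckLp]
    rw [hx, hTnorm, hg₀def]
    exact kp_ind (Real.rpow_pos_of_pos (inv_pos.mpr hs0) _) x
  have hKf_mem : MemLp (kaltonPeckLp f) (ENNReal.ofReal p) μ01 :=
    (hf₀mem.const_smul _).ae_eq hKf_ae.symm
  have hKTf_mem : MemLp (kaltonPeckLp (T f)) (ENNReal.ofReal p) μ01 :=
    (hg₀mem.const_smul _).ae_eq hKTf_ae.symm
  refine ⟨T, f, hfnorm, hKf_mem, hKTf_mem, ?_⟩
  have h1 : hKf_mem.toLp (kaltonPeckLp f) = (Real.log ((((1:ℝ)/2)⁻¹)^(1/p))) • f := by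
    apply Lp.ext
    refine (MemLp.coeFn_toLp _).trans (hKf_ae.trans ?_)
    refine Filter.EventuallyEq.trans ?_ (Lp.coeFn_smul _ _).symm
    filter_upwards [hcoef] with x hx
    simp only [Pi.smul_apply, smul_eq_mul, hx]
  have h2 : hKTf_mem.toLp (kaltonPeckLp (T f)) = (Real.log ((s⁻¹)^(1/p))) • (T f) := by
    apply Lp.ext
    refine (MemLp.coeFn_toLp _).trans (hKTf_ae.trans ?_)
    refine Filter.EventuallyEq.trans ?_ (Lp.coeFn_smul _ _).symm
    filter_upwards [hTfae] with x hx
    simp only [Pi.smul_apply, smul_eq_mul, hx]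
  show C < ‖hKTf_mem.toLp (kaltonPeckLp (T f)) - T (hKf_mem.toLp (kaltonPeckLp f))‖
  rw [h1, h2, LinearIsometryEquiv.map_smul, ← sub_smul, norm_smul, Real.norm_eq_abs, hTnorm, mul_one]
  have hsinv : s⁻¹ = 2 * Real.exp (p*C+1) := by
    rw [hs_def, Real.exp_neg]
    field_simp
  have hc2 : Real.log ((s⁻¹)^(1/p)) = (1/p) * (Real.log 2 + (p*C+1)) := by
    rw [Real.log_rpow (inv_pos.mpr hs0), hsinv,
      Real.log_mul two_ne_zero (Real.exp_ne_zero _), Real.log_exp]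
  have hc1 : Real.log ((((1:ℝ)/2)⁻¹)^(1/p)) = (1/p) * Real.log 2 := by
    rw [Real.log_rpow (by norm_num)]
    norm_num
  rw [hc2, hc1]
  have hdiff : (1/p) * (Real.log 2 + (p*C+1)) - (1/p) * Real.log 2 = C + 1/p := by
    field_simp
    ring
  rw [hdiff]
  have h1p : 0 < 1/p := by positivity
  rw [abs_of_pos (by linarith)]
  linarith
end

section
/- Let (S, μ) be a σ-finite measure space, 1 ≤ p < ∞, and let Z_p(μ) = {(x, f) ∈ L⁰(μ) × L_p(μ) : x − K f ∈ L_p(μ)} be the Kalton–Peck twisted sum, equipped with the quasi-norm N(x, f) = ‖x − K f‖_p + ‖f‖_p. Let T f = ε·w^{1/p}·(f∘φ) be a Banach–Lamperti operator on L_p(μ), and T̄ its extension to L⁰(μ) by the same formula. Then the map Λ_T(x, f) = (T̄ x + (1/p)·(log w)·(T f), T f), with the convention that (log w)·(T f) is 0 wherever T f vanishes, maps Z_p(μ) into Z_p(μ) and preserves the quasi-norm exactly: N(Λ_T(x, f)) = N(x, f) for every (x, f) ∈ Z_p(μ). (This is the isometric extension to Z_p of the isometry T of L_p witnessing that the isometry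 group of L_p extends as an isometry group acting on the Kalton–Peck space, with derivation d(T) = −(1/p)(log w)·T.) -/
open MeasureTheory
open scoped ENNReal


/-- Pullback of null sets along a Banach–Lamperti change of variables:
if `μ A = 0` then a.e. `φ s ∈ A → w s = 0`. -/
lemma bl_null {S : Type*} [MeasurableSpace S] (μ : Measure S)
    (φ : S ≃ᵐ S) (w : S → ℝ) (hw : Measurable w) (hw0 : ∀ s, 0 ≤ w s)
    (hpush : ∀ g : S → ℝ≥0∞, Measurable g →
      ∫⁻ s, g (φ s) * ENNReal.ofReal (w s) ∂μ = ∫⁻ s, g s ∂μ)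
    (A : Set S) (hA : MeasurableSet A) (hA0 : μ A = 0) :
    ∀ᵐ s ∂μ, φ s ∈ A → w s = 0 := by
  have h := hpush (A.indicator 1) (measurable_one.indicator hA)
  rw [lintegral_indicator_one hA, hA0] at h
  have hmeas : Measurable fun s => A.indicator (1 : S → ℝ≥0∞) (φ s) * ENNReal.ofReal (w s) :=
    ((measurable_one.indicator hA).comp φ.measurable).mul hw.ennreal_ofReal
  have hz := (lintegral_eq_zero_iff hmeas).mp h
  filter_upwards [hz] with s hs hmem
  rw [Set.indicator_of_mem hmem, Pi.one_apply, one_mul] at hs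
  exact le_antisymm (ENNReal.ofReal_eq_zero.mp hs) (hw0 s)

/-- A Banach–Lamperti operator preserves a.e.-measurability and the `L^p` norm. -/
lemma bl_isometry {S : Type*} [MeasurableSpace S] (μ : Measure S)
    (p : ℝ) (hp : 1 ≤ p)
    (φ : S ≃ᵐ S) (w : S → ℝ) (hw : Measurable w) (hw0 : ∀ s, 0 ≤ w s)
    (hpush : ∀ g : S → ℝ≥0∞, Measurable g →
      ∫⁻ s, g (φ s) * ENNReal.ofReal (w s) ∂μ = ∫⁻ s, g s ∂μ)
    (ε : S → ℝ) (hε : Measurable ε) (hε1 : ∀ᵐ s ∂μ, |ε s| = 1)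
    (g : S → ℝ) (hg : AEMeasurable g μ) :
    AEMeasurable (fun s => ε s * w s ^ (1 / p) * g (φ s)) μ ∧
    eLpNorm (fun s => ε s * w s ^ (1 / p) * g (φ s)) (ENNReal.ofReal p) μ
      = eLpNorm g (ENNReal.ofReal p) μ := by
  have hp0 : 0 < p := lt_of_lt_of_le one_pos hp
  set g' := hg.mk g with hg'def
  have hg' : Measurable g' := hg.measurable_mk
  have hgg' : g =ᵐ[μ] g' := hg.ae_eq_mk
  set A := toMeasurable μ {s | g s ≠ g' s} with hAdef
  have hA0 : μ A = 0 := by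
    rw [measure_toMeasurable]
    exact hgg'
  have hnull := bl_null μ φ w hw hw0 hpush A (measurableSet_toMeasurable μ _) hA0
  have hw' : Measurable fun s => w s ^ (1 / p) :=
    (Real.continuous_rpow_const (by positivity)).measurable.comp hw
  have hTg' : Measurable fun s => ε s * w s ^ (1 / p) * g' (φ s) :=
    (hε.mul hw').mul (hg'.comp φ.measurable)
  have heq : (fun s => ε s * w s ^ (1 / p) * g (φ s))
      =ᵐ[μ] fun s => ε s * w s ^ (1 / p) * g' (φ s) := by
    filter_upwards [hnull] with s hs
    by_cases hws : w s = 0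
    · rw [hws, Real.zero_rpow (one_div_ne_zero hp0.ne'), mul_zero, zero_mul, zero_mul]
    · have : g (φ s) = g' (φ s) := by
        by_contra hne
        exact hws (hs (subset_toMeasurable μ _ hne))
      rw [this]
  have hmeasT : AEMeasurable (fun s => ε s * w s ^ (1 / p) * g (φ s)) μ :=
    hTg'.aemeasurable.congr heq.symm
  refine ⟨hmeasT, ?_⟩
  have hp'0 : (ENNReal.ofReal p) ≠ 0 := ne_of_gt (ENNReal.ofReal_pos.mpr hp0)
  have hp't : (ENNReal.ofReal p) ≠ ⊤ := ENNReal.ofReal_ne_top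
  rw [eLpNorm_eq_lintegral_rpow_enorm_toReal hp'0 hp't, eLpNorm_eq_lintegral_rpow_enorm_toReal hp'0 hp't,
    ENNReal.toReal_ofReal hp0.le]
  congr 1
  have hGmeas : Measurable fun t => (‖g' t‖₊ : ℝ≥0∞) ^ p :=
    ENNReal.continuous_rpow_const.measurable.comp hg'.nnnorm.coe_nnreal_ennreal
  calc ∫⁻ s, (‖ε s * w s ^ (1 / p) * g (φ s)‖₊ : ℝ≥0∞) ^ p ∂μ
      = ∫⁻ s, (fun t => (‖g' t‖₊ : ℝ≥0∞) ^ p) (φ s) * ENNReal.ofReal (w s) ∂μ := by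
        refine lintegral_congr_ae ?_
        filter_upwards [hε1, hnull] with s hεs hs
        by_cases hws : w s = 0
        · rw [hws, Real.zero_rpow (one_div_ne_zero hp0.ne'), mul_zero, zero_mul, nnnorm_zero,
            ENNReal.coe_zero, ENNReal.zero_rpow_of_pos hp0, ENNReal.ofReal_zero, mul_zero]
        · have hgs : g (φ s) = g' (φ s) := by
            by_contra hne
            exact hws (hs (subset_toMeasurable μ _ hne))
          have hwp : (0:ℝ) ≤ w s ^ (1 / p) := Real.rpow_nonneg (hw0 s) _
          rw [hgs, ← enorm_eq_nnnorm, ← enorm_eq_nnnorm, ← ofReal_norm, ← ofReal_norm,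
            Real.norm_eq_abs, Real.norm_eq_abs,
            ENNReal.ofReal_rpow_of_nonneg (abs_nonneg _) hp0.le,
            ENNReal.ofReal_rpow_of_nonneg (abs_nonneg _) hp0.le,
            ← ENNReal.ofReal_mul (by positivity)]
          congr 1
          rw [abs_mul, abs_mul, hεs, one_mul, abs_of_nonneg hwp,
            Real.mul_rpow hwp (abs_nonneg _), ← Real.rpow_mul (hw0 s),
            one_div_mul_cancel hp0.ne', Real.rpow_one]
          ring
    _ = ∫⁻ s, (‖g' s‖₊ : ℝ≥0∞) ^ p ∂μ := hpush _ hGmeas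
    _ = ∫⁻ s, (‖g s‖₊ : ℝ≥0∞) ^ p ∂μ := by
        refine lintegral_congr_ae ?_
        filter_upwards [hgg'] with s hs
        rw [hs]

/-- the triangular map
`Λ_T(x,f) = (T̄x + (1/p)(log w)·(Tf), Tf)` associated to a Banach–Lamperti
operator `T` maps the Kalton–Peck twisted sum `Z_p(μ)` into itself and preserves
the twisted-sum quasi-norm `N(x,f) = ‖x − Kf‖_p + ‖f‖_p` exactly. -/
theorem stmt_12 {S : Type*} [MeasurableSpace S] (μ : Measure S) [SigmaFinite μ]
    (p : ℝ) (hp : 1 ≤ p)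
    (φ : S ≃ᵐ S) (w : S → ℝ) (hw : Measurable w) (hw0 : ∀ s, 0 ≤ w s)
    (hpush : ∀ g : S → ℝ≥0∞, Measurable g →
      ∫⁻ s, g (φ s) * ENNReal.ofReal (w s) ∂μ = ∫⁻ s, g s ∂μ)
    (ε : S → ℝ) (hε : Measurable ε) (hε1 : ∀ᵐ s ∂μ, |ε s| = 1)
    -- an element (x, f) of the Kalton–Peck twisted sum Z_p(μ) ⊆ L⁰(μ) × L_p(μ)
    (x : S → ℝ) (hx : AEMeasurable x μ)
    (f : S → ℝ) (hf : MemLp f (ENNReal.ofReal p) μ)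
    (hxf : MemLp (fun s => x s - kaltonPeck p μ f s) (ENNReal.ofReal p) μ) :
    -- Λ_T(x, f) again belongs to Z_p(μ) ...
    MemLp (fun s => ε s * w s ^ (1 / p) * f (φ s)) (ENNReal.ofReal p) μ ∧
    MemLp (fun s =>
        (ε s * w s ^ (1 / p) * x (φ s)
          + (if ε s * w s ^ (1 / p) * f (φ s) = 0 then 0
             else (1 / p) * Real.log (w s) * (ε s * w s ^ (1 / p) * f (φ s))))
        - kaltonPeck p μ (fun t => ε t * w t ^ (1 / p) * f (φ t)) s)
      (ENNReal.ofReal p) μ ∧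
    -- ... and the quasi-norm is preserved exactly: N(Λ_T(x,f)) = N(x,f)
    (eLpNorm (fun s =>
        (ε s * w s ^ (1 / p) * x (φ s)
          + (if ε s * w s ^ (1 / p) * f (φ s) = 0 then 0
             else (1 / p) * Real.log (w s) * (ε s * w s ^ (1 / p) * f (φ s))))
        - kaltonPeck p μ (fun t => ε t * w t ^ (1 / p) * f (φ t)) s)
      (ENNReal.ofReal p) μ).toReal
      + (eLpNorm (fun s => ε s * w s ^ (1 / p) * f (φ s)) (ENNReal.ofReal p) μ).toReal
    = (eLpNorm (fun s => x s - kaltonPeck p μ f s) (ENNReal.ofReal p) μ).toReal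
      + (eLpNorm f (ENNReal.ofReal p) μ).toReal := by
  have hp0 : 0 < p := lt_of_lt_of_le one_pos hp
  have hp'0 : (ENNReal.ofReal p) ≠ 0 := ne_of_gt (ENNReal.ofReal_pos.mpr hp0)
  obtain ⟨hTf_meas, hTf_norm⟩ :=
    bl_isometry μ p hp φ w hw hw0 hpush ε hε hε1 f hf.1.aemeasurable
  have hTf_mem : MemLp (fun s => ε s * w s ^ (1 / p) * f (φ s)) (ENNReal.ofReal p) μ :=
    ⟨hTf_meas.aestronglyMeasurable, hTf_norm ▸ hf.2⟩
  refine ⟨hTf_mem, ?_⟩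
  -- the "vertical" function y = x - K f
  obtain ⟨hTy_meas, hTy_norm⟩ :=
    bl_isometry μ p hp φ w hw hw0 hpush ε hε hε1 (fun s => x s - kaltonPeck p μ f s)
      hxf.1.aemeasurable
  have hTy_mem : MemLp (fun s => ε s * w s ^ (1 / p) * (x (φ s) - kaltonPeck p μ f (φ s)))
      (ENNReal.ofReal p) μ :=
    ⟨hTy_meas.aestronglyMeasurable, hTy_norm ▸ hxf.2⟩
  -- when ‖f‖_p = 0, a.e. w s = 0 or f (φ s) = 0
  have hn0 : ∀ᵐ s ∂μ, (eLpNorm f (ENNReal.ofReal p) μ).toReal = 0 →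
      (w s = 0 ∨ f (φ s) = 0) := by
    by_cases hn : (eLpNorm f (ENNReal.ofReal p) μ).toReal = 0
    · have hf0 : f =ᵐ[μ] 0 := by
        refine (eLpNorm_eq_zero_iff hf.1 hp'0).mp ?_
        rcases (ENNReal.toReal_eq_zero_iff _).mp hn with h | h
        · exact h
        · exact absurd h hf.2.ne
      have hA0 : μ (toMeasurable μ {s | f s ≠ 0}) = 0 := by
        rw [measure_toMeasurable]; exact hf0
      have := bl_null μ φ w hw hw0 hpush _ (measurableSet_toMeasurable μ _) hA0
      filter_upwards [this] with s hs _
      by_cases hws : w s = 0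
      · exact Or.inl hws
      · refine Or.inr (by_contra fun hfs => hws (hs (subset_toMeasurable μ _ hfs)))
    · filter_upwards with s h; exact absurd h hn
  -- the key a.e. identity: first component of Λ_T(x,f) minus K(Tf) equals T(x - Kf)
  have hKT : (eLpNorm (fun t => ε t * w t ^ (1 / p) * f (φ t)) (ENNReal.ofReal p) μ).toReal
      = (eLpNorm f (ENNReal.ofReal p) μ).toReal := by rw [hTf_norm]
  have hkey : (fun s =>
        (ε s * w s ^ (1 / p) * x (φ s)
          + (if ε s * w s ^ (1 / p) * f (φ s) = 0 then 0
             else (1 / p) * Real.log (w s) * (ε s * w s ^ (1 / p) * f (φ s))))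
        - kaltonPeck p μ (fun t => ε t * w t ^ (1 / p) * f (φ t)) s)
      =ᵐ[μ] fun s => ε s * w s ^ (1 / p) * (x (φ s) - kaltonPeck p μ f (φ s)) := by
    filter_upwards [hε1, hn0] with s hεs hns
    simp only [kaltonPeck]
    rw [hKT]
    set n := (eLpNorm f (ENNReal.ofReal p) μ).toReal with hn
    set c := ε s * w s ^ (1 / p) with hc
    by_cases h0 : c * f (φ s) = 0
    · have h1 : c * (f (φ s) * Real.log (|f (φ s)| / n)) = 0 := by
        rw [← mul_assoc, h0, zero_mul]
      rw [if_pos h0, h0, mul_sub, h1]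
      ring
    · rw [if_neg h0]
      have ha : f (φ s) ≠ 0 := fun h => h0 (by rw [h, mul_zero])
      have hc0 : c ≠ 0 := fun h => h0 (by rw [h, zero_mul])
      have hws : w s ≠ 0 := by
        intro h
        exact hc0 (by rw [hc, h, Real.zero_rpow (one_div_ne_zero hp0.ne'), mul_zero])
      have hwpos : 0 < w s := (hw0 s).lt_of_ne (Ne.symm hws)
      have hnne : n ≠ 0 := by
        intro h
        rcases hns h with h1 | h2
        exacts [hws h1, ha h2]
      have habs : |c * f (φ s)| = w s ^ (1 / p) * |f (φ s)| := by
        rw [abs_mul, hc, abs_mul, hεs, one_mul,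
          abs_of_nonneg (Real.rpow_nonneg (hw0 s) _)]
      rw [habs]
      have hlog : Real.log (w s ^ (1 / p) * |f (φ s)| / n)
          = 1 / p * Real.log (w s) + Real.log (|f (φ s)| / n) := by
        rw [mul_div_assoc,
          Real.log_mul (ne_of_gt (Real.rpow_pos_of_pos hwpos _))
            (div_ne_zero (abs_ne_zero.mpr ha) hnne),
          Real.log_rpow hwpos]
      rw [hlog]
      ring
  refine ⟨hTy_mem.ae_eq hkey.symm, ?_⟩
  rw [eLpNorm_congr_ae hkey, hTy_norm, hTf_norm]
end

section
/- The natural action of the unitary group of the complex Hilbert space ℓ₂ is not compatible with the Kalton–Peck map: there do not exist a constant C ≥ 0 and an assignment, to each unitary operator u of ℓ₂, of a linear map d_u : c₀₀ → ℂ^ℕ such that for every unitary u and every finitely supported vector x with ‖x‖₂ = 1, the sequence u(K x) − K(u x) + d_u(x) belongs to ℓ₂ and has ℓ₂-norm at most C. (Here K x is the pointwise-defined Kalton–Peck sequence, finitely supported whenever x is, and K(u x) ∈ ℂ^ℕ is defined pointwise.) -/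
/-- The Kalton–Peck map on `ℓ₂(ℕ,ℂ)`, defined pointwise:
`(K x)ₙ = xₙ · log(|xₙ| / ‖x‖₂)` (with the convention `Real.log 0 = 0`,
so `0·log 0 = 0` and `K 0 = 0`). -/
noncomputable def kaltonPeckSeq (x : lp (fun _ : ℕ => ℂ) 2) : ℕ → ℂ :=
  fun n => x n * (Real.log (‖x n‖ / ‖x‖) : ℂ)

noncomputable section

namespace Stmt13Aux

abbrev Hsp := lp (fun _ : ℕ => ℂ) 2

/-- Hadamard matrix entries indexed by `Fin L → Bool`. -/
def hd {L : ℕ} (s t : Fin L → Bool) : ℝ := ∏ j, (if s j && t j then (-1 : ℝ) else 1)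

lemma hd_symm {L : ℕ} (s t : Fin L → Bool) : hd s t = hd t s := by
  unfold hd; simp [Bool.and_comm]

lemma hd_eq {L : ℕ} (s t : Fin L → Bool) : hd s t = 1 ∨ hd s t = -1 := by
  unfold hd
  induction (Finset.univ : Finset (Fin L)) using Finset.induction with
  | empty => simp
  | insert _ _ h ih =>
      rw [Finset.prod_insert h]
      rcases ih with ih | ih <;> rw [ih] <;> split_ifs <;> simp

lemma hd_abs {L : ℕ} (s t : Fin L → Bool) : |hd s t| = 1 := by
  rcases hd_eq s t with h | h <;> rw [h] <;> norm_num

lemma hd_mul_self {L : ℕ} (s t : Fin L → Bool) : hd s t * hd s t = 1 := by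
  rcases hd_eq s t with h | h <;> rw [h] <;> norm_num

lemma hd_orth {L : ℕ} (s s' : Fin L → Bool) :
    ∑ t, hd s t * hd s' t = if s = s' then (2 ^ L : ℝ) else 0 := by
  have h1 : ∀ t : Fin L → Bool, hd s t * hd s' t
      = ∏ j, ((if s j && t j then (-1 : ℝ) else 1) * (if s' j && t j then (-1 : ℝ) else 1)) := by
    intro t; rw [Finset.prod_mul_distrib]; rfl
  rw [Finset.sum_congr rfl fun t _ => h1 t]
  rw [← Fintype.prod_sum (fun j b => (if s j && b then (-1 : ℝ) else 1) * (if s' j && b then (-1 : ℝ) else 1))]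
  by_cases h : s = s'
  · subst h
    rw [if_pos rfl]
    have : ∀ j : Fin L, (∑ b, (if s j && b then (-1 : ℝ) else 1) * (if s j && b then (-1 : ℝ) else 1)) = 2 := by
      intro j; rw [Fintype.sum_bool]; cases hsj : s j <;> simp <;> norm_num
    rw [Finset.prod_congr rfl fun j _ => this j]
    simp
  · rw [if_neg h]
    obtain ⟨j, hj⟩ : ∃ j, s j ≠ s' j := by
      by_contra hc; push_neg at hc; exact h (funext hc)
    apply Finset.prod_eq_zero (Finset.mem_univ j)
    rw [Fintype.sum_bool]
    cases hsj : s j <;> cases hsj' : s' j <;> simp_all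


/-- An encoding of the index set into `ℕ`. -/
def enc (L : ℕ) : Encodable (Fin L → Bool) := (nonempty_encodable _).some

def en (L : ℕ) (s : Fin L → Bool) : ℕ := (enc L).encode s

def dec (L : ℕ) (n : ℕ) : Option (Fin L → Bool) :=
  ((enc L).decode n).bind fun s => if en L s = n then some s else none

lemma dec_en (L : ℕ) (s : Fin L → Bool) : dec L (en L s) = some s := by
  unfold dec
  rw [show (enc L).decode (en L s) = some s from (enc L).encodek s]
  simp

lemma en_of_dec {L : ℕ} {n : ℕ} {s : Fin L → Bool} (h : dec L n = some s) : en L s = n := by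
  unfold dec at h
  rcases hd : (enc L).decode n with _ | s'
  · rw [hd] at h; simp at h
  · rw [hd] at h
    simp only [Option.bind_some] at h
    by_cases hh : en L s' = n
    · rw [if_pos hh] at h; exact Option.some.inj h ▸ hh
    · rw [if_neg hh] at h; cases h

lemma en_inj (L : ℕ) : Function.Injective (en L) := (enc L).encode_injective

lemma ne_en_of_dec_none {L : ℕ} {n : ℕ} (h : dec L n = none) (s : Fin L → Bool) :
    n ≠ en L s := by
  intro hn; rw [hn, dec_en] at h; cases h

/-- The standard basis vectors of the block. -/
def Efn (L : ℕ) (s : Fin L → Bool) : Hsp := lp.single 2 (en L s) 1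

lemma E_apply (L : ℕ) (s : Fin L → Bool) (n : ℕ) :
    (Efn L s) n = if n = en L s then 1 else 0 := by
  by_cases h : n = en L s
  · subst h; simp [Efn, lp.single_apply_self]
  · simp [Efn, lp.single_apply_ne _ _ _ h, h]

lemma norm_E (L : ℕ) (s : Fin L → Bool) : ‖Efn L s‖ = 1 := by
  have := lp.norm_single (p := 2) (E := fun _ : ℕ => ℂ) (by norm_num) (en L s) (1 : ℂ)
  simpa [Efn] using this

lemma sum_apply' {ι : Type*} (s : Finset ι) (f : ι → Hsp) (n : ℕ) :
    (∑ i ∈ s, f i) n = ∑ i ∈ s, f i n := by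
  rw [lp.coeFn_sum]; simp

lemma sumE_apply_en (L : ℕ) (a : (Fin L → Bool) → ℂ) (s : Fin L → Bool) :
    (∑ s', a s' • Efn L s') (en L s) = a s := by
  rw [sum_apply']
  have : ∀ s', (a s' • Efn L s') (en L s) = if s = s' then a s' else 0 := by
    intro s'
    rw [lp.coeFn_smul, Pi.smul_apply, smul_eq_mul, E_apply]
    simp only [(en_inj L).eq_iff]
    split_ifs with h1 h2 h2 <;> simp_all [eq_comm]
  rw [Finset.sum_congr rfl fun s' _ => this s']
  simp

lemma sumE_apply_none (L : ℕ) (a : (Fin L → Bool) → ℂ) {n : ℕ} (h : dec L n = none) :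
    (∑ s', a s' • Efn L s') n = 0 := by
  rw [sum_apply']
  apply Finset.sum_eq_zero
  intro s' _
  rw [lp.coeFn_smul, Pi.smul_apply, smul_eq_mul, E_apply, if_neg (ne_en_of_dec_none h s'),
    mul_zero]


/-- The normalization constant `2^{-L/2}`. -/
def cL (L : ℕ) : ℝ := (Real.sqrt (2 ^ L))⁻¹

lemma cL_pos (L : ℕ) : 0 < cL L := by
  unfold cL
  positivity

lemma cL_sq (L : ℕ) : cL L * cL L * 2 ^ L = 1 := by
  unfold cL
  have h : Real.sqrt (2 ^ L) ≠ 0 := by positivity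
  rw [← mul_inv, Real.mul_self_sqrt (by positivity)]
  exact inv_mul_cancel₀ (by positivity)

lemma log_cL (L : ℕ) : Real.log (cL L) = -(L * Real.log 2) / 2 := by
  unfold cL
  rw [Real.log_inv, Real.log_sqrt (by positivity), Real.log_pow]
  ring

lemma hd_orthC {L : ℕ} (s s' : Fin L → Bool) :
    ∑ t, (hd s t : ℂ) * (hd s' t : ℂ) = if s = s' then (2 ^ L : ℂ) else 0 := by
  have h := hd_orth s s'
  have h2 : ∑ t, (hd s t : ℂ) * (hd s' t : ℂ) = ((∑ t, hd s t * hd s' t : ℝ) : ℂ) := by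
    push_cast; rfl
  rw [h2, h]
  split_ifs <;> push_cast <;> rfl

/-- Parseval identity for the Hadamard coefficients, in any complex inner ℂ product space. -/
lemma parseval {L : ℕ} {F : Type*} [NormedAddCommGroup F] [InnerProductSpace ℂ F]
    (v : (Fin L → Bool) → F) :
    ∑ s, ‖∑ t, (hd s t : ℂ) • v t‖ ^ 2 = 2 ^ L * ∑ t, ‖v t‖ ^ 2 := by
  have expand : ∀ s, (inner ℂ (∑ t, (hd s t : ℂ) • v t) (∑ t', (hd s t' : ℂ) • v t') : ℂ)
      = ∑ t, ∑ t', (hd s t : ℂ) * (hd s t' : ℂ) * (inner ℂ (v t) (v t') : ℂ) := by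
    intro s
    rw [sum_inner]
    refine Finset.sum_congr rfl fun t _ => ?_
    rw [inner_smul_left, inner_sum, Finset.mul_sum]
    refine Finset.sum_congr rfl fun t' _ => ?_
    rw [inner_smul_right, Complex.conj_ofReal]
    ring
  have key : ∑ s, (inner ℂ (∑ t, (hd s t : ℂ) • v t) (∑ t', (hd s t' : ℂ) • v t') : ℂ)
      = (2 ^ L : ℂ) * ∑ t, (inner ℂ (v t) (v t) : ℂ) := by
    rw [Finset.sum_congr rfl fun s _ => expand s]
    rw [Finset.sum_comm]
    have swap2 : ∀ t, ∑ s, ∑ t', (hd s t : ℂ) * (hd s t' : ℂ) * (inner ℂ (v t) (v t') : ℂ)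
        = ∑ t', (∑ s, (hd t s : ℂ) * (hd t' s : ℂ)) * (inner ℂ (v t) (v t') : ℂ) := by
      intro t
      rw [Finset.sum_comm]
      refine Finset.sum_congr rfl fun t' _ => ?_
      rw [Finset.sum_mul]
      refine Finset.sum_congr rfl fun s _ => ?_
      rw [hd_symm s t, hd_symm s t']
    rw [Finset.sum_congr rfl fun t _ => swap2 t]
    rw [Finset.mul_sum]
    refine Finset.sum_congr rfl fun t _ => ?_
    rw [Finset.sum_congr rfl fun t' _ => by rw [hd_orthC t t']]
    simp [ite_mul, Finset.sum_ite_eq]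
  calc ∑ s, ‖∑ t, (hd s t : ℂ) • v t‖ ^ 2
      = ∑ s, Complex.re (inner ℂ (∑ t, (hd s t : ℂ) • v t) (∑ t', (hd s t' : ℂ) • v t') : ℂ) := by
        refine Finset.sum_congr rfl fun s _ => ?_
        exact InnerProductSpace.norm_sq_eq_re_inner (𝕜 := ℂ) _
    _ = Complex.re (∑ s, (inner ℂ (∑ t, (hd s t : ℂ) • v t) (∑ t', (hd s t' : ℂ) • v t') : ℂ)) := by
        rw [Complex.re_sum]
    _ = Complex.re ((2 ^ L : ℂ) * ∑ t, (inner ℂ (v t) (v t) : ℂ)) := by rw [key]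
    _ = 2 ^ L * ∑ t, ‖v t‖ ^ 2 := by
        rw [show ((2:ℂ) ^ L) = (((2:ℝ) ^ L : ℝ) : ℂ) by push_cast; rfl]
        rw [Complex.re_ofReal_mul, Complex.re_sum]
        congr 1
        refine Finset.sum_congr rfl fun t _ => ?_
        exact (InnerProductSpace.norm_sq_eq_re_inner (𝕜 := ℂ) (v t)).symm


lemma inner_E_left (L : ℕ) (s : Fin L → Bool) (f : Hsp) :
    (inner ℂ (Efn L s) f : ℂ) = f (en L s) := by
  unfold Efn
  rw [lp.inner_single_left]
  simp [RCLike.inner_apply]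

lemma norm_sumE_sq (L : ℕ) (a : (Fin L → Bool) → ℂ) :
    ‖∑ s, a s • Efn L s‖ ^ 2 = ∑ s, ‖a s‖ ^ 2 := by
  have key : (inner ℂ (∑ s, a s • Efn L s) (∑ s', a s' • Efn L s') : ℂ)
      = ∑ s, (starRingEnd ℂ) (a s) * a s := by
    rw [sum_inner]
    refine Finset.sum_congr rfl fun s _ => ?_
    rw [inner_smul_left, inner_E_left, sumE_apply_en]
  rw [InnerProductSpace.norm_sq_eq_re_inner (𝕜 := ℂ), key, map_sum]
  refine Finset.sum_congr rfl fun s _ => ?_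
  rw [RCLike.conj_mul (a s)]
  norm_cast

/-- The Hadamard unitary, as a plain function. -/
def Ufn (L : ℕ) (x : Hsp) : Hsp :=
  x - (∑ s, x (en L s) • Efn L s)
    + ∑ s, ((cL L : ℂ) * ∑ t, (hd s t : ℂ) * x (en L t)) • Efn L s

lemma Ufn_apply_en (L : ℕ) (x : Hsp) (s : Fin L → Bool) :
    (Ufn L x) (en L s) = (cL L : ℂ) * ∑ t, (hd s t : ℂ) * x (en L t) := by
  unfold Ufn
  rw [lp.coeFn_add, Pi.add_apply, lp.coeFn_sub, Pi.sub_apply, sumE_apply_en, sumE_apply_en]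
  ring

lemma Ufn_apply_none (L : ℕ) (x : Hsp) {n : ℕ} (h : dec L n = none) :
    (Ufn L x) n = x n := by
  unfold Ufn
  rw [lp.coeFn_add, Pi.add_apply, lp.coeFn_sub, Pi.sub_apply, sumE_apply_none L _ h,
    sumE_apply_none L _ h]
  ring


lemma Ufn_add (L : ℕ) (x y : Hsp) : Ufn L (x + y) = Ufn L x + Ufn L y := by
  apply lp.ext; funext n
  rw [lp.coeFn_add, Pi.add_apply]
  rcases hdec : dec L n with _ | s
  · rw [Ufn_apply_none L _ hdec, Ufn_apply_none L _ hdec, Ufn_apply_none L _ hdec,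
      lp.coeFn_add, Pi.add_apply]
  · obtain rfl := en_of_dec hdec
    rw [Ufn_apply_en, Ufn_apply_en, Ufn_apply_en]
    simp only [lp.coeFn_add, Pi.add_apply]
    rw [← mul_add, ← Finset.sum_add_distrib]
    congr 1
    refine Finset.sum_congr rfl fun t _ => ?_
    ring

lemma Ufn_smul (L : ℕ) (c : ℂ) (x : Hsp) : Ufn L (c • x) = c • Ufn L x := by
  apply lp.ext; funext n
  rw [lp.coeFn_smul, Pi.smul_apply, smul_eq_mul]
  rcases hdec : dec L n with _ | s
  · rw [Ufn_apply_none L _ hdec, Ufn_apply_none L _ hdec, lp.coeFn_smul, Pi.smul_apply,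
      smul_eq_mul]
  · obtain rfl := en_of_dec hdec
    rw [Ufn_apply_en, Ufn_apply_en]
    simp only [lp.coeFn_smul, Pi.smul_apply, smul_eq_mul]
    have hterm : ∀ t, (hd s t : ℂ) * (c * x (en L t)) = c * ((hd s t : ℂ) * x (en L t)) :=
      fun t => by ring
    rw [Finset.sum_congr rfl fun t _ => hterm t, ← Finset.mul_sum]
    ring

lemma Ufn_invol (L : ℕ) (x : Hsp) : Ufn L (Ufn L x) = x := by
  apply lp.ext; funext n
  rcases hdec : dec L n with _ | s
  · rw [Ufn_apply_none L _ hdec, Ufn_apply_none L _ hdec]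
  · obtain rfl := en_of_dec hdec
    rw [Ufn_apply_en]
    have h1 : ∀ t, (Ufn L x) (en L t) = (cL L : ℂ) * ∑ t', (hd t t' : ℂ) * x (en L t') :=
      fun t => Ufn_apply_en L x t
    calc (cL L : ℂ) * ∑ t, (hd s t : ℂ) * (Ufn L x) (en L t)
        = (cL L : ℂ) * (cL L : ℂ) * ∑ t, ∑ t', (hd s t : ℂ) * ((hd t t' : ℂ) * x (en L t')) := by
          rw [Finset.sum_congr rfl fun t _ => by rw [h1 t]]
          simp only [Finset.mul_sum]
          refine Finset.sum_congr rfl fun t _ => Finset.sum_congr rfl fun t' _ => by ring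
      _ = (cL L : ℂ) * (cL L : ℂ) * ∑ t', (∑ t, (hd s t : ℂ) * (hd t' t : ℂ)) * x (en L t') := by
          rw [Finset.sum_comm]
          congr 1
          refine Finset.sum_congr rfl fun t' _ => ?_
          rw [Finset.sum_mul]
          refine Finset.sum_congr rfl fun t _ => ?_
          rw [hd_symm t t']
          ring
      _ = (cL L : ℂ) * (cL L : ℂ) * ((2 ^ L : ℂ) * x (en L s)) := by
          congr 1
          rw [Finset.sum_congr rfl fun t' _ => by rw [hd_orthC s t']]
          simp [ite_mul, Finset.sum_ite_eq]
      _ = x (en L s) := by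
          rw [← mul_assoc]
          have h2 : ((cL L : ℂ) * (cL L : ℂ) * (2 ^ L : ℂ))
              = ((cL L * cL L * 2 ^ L : ℝ) : ℂ) := by push_cast; ring
          rw [h2, cL_sq, Complex.ofReal_one, one_mul]


lemma norm_Ufn (L : ℕ) (x : Hsp) : ‖Ufn L x‖ = ‖x‖ := by
  classical
  set a : (Fin L → Bool) → ℂ := fun s => x (en L s) with ha
  set P : Hsp := ∑ s, a s • Efn L s with hP
  set Z : Hsp := ∑ s, ((cL L : ℂ) * ∑ t, (hd s t : ℂ) * a t) • Efn L s with hZ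
  set y : Hsp := x - P with hy
  have hU : Ufn L x = y + Z := rfl
  have hx : x = y + P := by rw [hy]; abel
  have hy_en : ∀ s, y (en L s) = 0 := by
    intro s
    rw [hy, lp.coeFn_sub, Pi.sub_apply, hP, sumE_apply_en, ha, sub_self]
  have hinner : ∀ b : (Fin L → Bool) → ℂ, (inner ℂ (∑ s, b s • Efn L s) y : ℂ) = 0 := by
    intro b
    rw [sum_inner]
    apply Finset.sum_eq_zero
    intro s _
    rw [inner_smul_left, inner_E_left, hy_en, mul_zero]
  have hPy : (inner ℂ y P : ℂ) = 0 := by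
    rw [← inner_conj_symm, hinner a, map_zero]
  have hZy : (inner ℂ y Z : ℂ) = 0 := by
    rw [← inner_conj_symm, hinner _, map_zero]
  have hnx : ‖x‖ ^ 2 = ‖y‖ ^ 2 + ‖P‖ ^ 2 := by
    rw [hx, @norm_add_sq ℂ _ _ _ _ y P, hPy]
    simp
  have hnU : ‖Ufn L x‖ ^ 2 = ‖y‖ ^ 2 + ‖Z‖ ^ 2 := by
    rw [hU, @norm_add_sq ℂ _ _ _ _ y Z, hZy]
    simp
  have hPn : ‖P‖ ^ 2 = ∑ s, ‖a s‖ ^ 2 := norm_sumE_sq L a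
  have hZn : ‖Z‖ ^ 2 = ∑ s, ‖a s‖ ^ 2 := by
    rw [hZ, norm_sumE_sq L]
    have hterm : ∀ s : Fin L → Bool, ‖(cL L : ℂ) * ∑ t, (hd s t : ℂ) * a t‖ ^ 2
        = cL L * cL L * ‖∑ t, (hd s t : ℂ) • a t‖ ^ 2 := by
      intro s
      simp only [smul_eq_mul]
      rw [norm_mul, mul_pow, Complex.norm_real, Real.norm_eq_abs, abs_of_pos (cL_pos L)]
      ring
    rw [Finset.sum_congr rfl fun s _ => hterm s, ← Finset.mul_sum, parseval, ← mul_assoc,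
      cL_sq, one_mul]
  have : ‖Ufn L x‖ ^ 2 = ‖x‖ ^ 2 := by rw [hnU, hnx, hPn, hZn]
  have h1 := congrArg Real.sqrt this
  rwa [Real.sqrt_sq (norm_nonneg _), Real.sqrt_sq (norm_nonneg _)] at h1

/-- The Hadamard unitary. -/
def U (L : ℕ) : Hsp ≃ₗᵢ[ℂ] Hsp :=
  { toLinearEquiv :=
      { toFun := Ufn L
        map_add' := Ufn_add L
        map_smul' := Ufn_smul L
        invFun := Ufn L
        left_inv := Ufn_invol L
        right_inv := Ufn_invol L }
    norm_map' := norm_Ufn L }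

lemma U_apply (L : ℕ) (x : Hsp) : U L x = Ufn L x := rfl


/-- The image of the basis vectors under the Hadamard unitary. -/
def Wfn (L : ℕ) (s : Fin L → Bool) : Hsp := Ufn L (Efn L s)

lemma W_apply_en (L : ℕ) (k s : Fin L → Bool) :
    (Wfn L k) (en L s) = (cL L : ℂ) * (hd s k : ℂ) := by
  unfold Wfn
  rw [Ufn_apply_en]
  congr 1
  have : ∀ t, (hd s t : ℂ) * (Efn L k) (en L t) = if k = t then (hd s t : ℂ) else 0 := by
    intro t
    rw [E_apply]
    simp only [(en_inj L).eq_iff]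
    split_ifs with h1 h2 h2 <;> simp_all [eq_comm]
  rw [Finset.sum_congr rfl fun t _ => this t]
  simp

lemma W_apply_none (L : ℕ) (k : Fin L → Bool) {n : ℕ} (h : dec L n = none) :
    (Wfn L k) n = 0 := by
  unfold Wfn
  rw [Ufn_apply_none L _ h, E_apply, if_neg (ne_en_of_dec_none h k)]

lemma norm_W (L : ℕ) (k : Fin L → Bool) : ‖Wfn L k‖ = 1 := by
  unfold Wfn
  rw [norm_Ufn, norm_E]

lemma UW (L : ℕ) (k : Fin L → Bool) : Ufn L (Wfn L k) = Efn L k := Ufn_invol L (Efn L k)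

lemma kp_E (L : ℕ) (s : Fin L → Bool) (n : ℕ) : kaltonPeckSeq (Efn L s) n = 0 := by
  unfold kaltonPeckSeq
  rw [E_apply]
  split_ifs with h
  · rw [norm_E]
    simp
  · simp

lemma kp_W (L : ℕ) (k : Fin L → Bool) (n : ℕ) :
    kaltonPeckSeq (Wfn L k) n = (Real.log (cL L) : ℂ) * (Wfn L k) n := by
  unfold kaltonPeckSeq
  rw [norm_W]
  rcases hdec : dec L n with _ | s
  · rw [W_apply_none L k hdec]
    simp
  · obtain rfl := en_of_dec hdec
    rw [W_apply_en]
    have habs : ‖(cL L : ℂ) * (hd s k : ℂ)‖ = cL L := by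
      rw [norm_mul, Complex.norm_real, Complex.norm_real, Real.norm_eq_abs, Real.norm_eq_abs,
        abs_of_pos (cL_pos L), hd_abs,
        mul_one]
    rw [habs]
    rw [div_one]
    ring


lemma sum_cW (L : ℕ) (k : Fin L → Bool) (n : ℕ) :
    ∑ t, (cL L : ℂ) * (hd k t : ℂ) * (Wfn L t) n = (Efn L k) n := by
  rcases hdec : dec L n with _ | s
  · rw [E_apply, if_neg (ne_en_of_dec_none hdec k)]
    apply Finset.sum_eq_zero
    intro t _
    rw [W_apply_none L t hdec, mul_zero]
  · obtain rfl := en_of_dec hdec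
    have hterm : ∀ t, (cL L : ℂ) * (hd k t : ℂ) * (Wfn L t) (en L s)
        = (cL L : ℂ) * (cL L : ℂ) * ((hd k t : ℂ) * (hd s t : ℂ)) := by
      intro t
      rw [W_apply_en]
      ring
    rw [Finset.sum_congr rfl fun t _ => hterm t, ← Finset.mul_sum, hd_orthC k s, E_apply]
    simp only [(en_inj L).eq_iff]
    by_cases hks : k = s
    · subst hks
      rw [if_pos rfl, if_pos rfl]
      have h2 : ((cL L : ℂ) * (cL L : ℂ) * (2 ^ L : ℂ)) = ((cL L * cL L * 2 ^ L : ℝ) : ℂ) := by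
        push_cast; ring
      rw [h2, cL_sq, Complex.ofReal_one]
    · rw [if_neg hks, if_neg fun hh => hks hh.symm, mul_zero]

lemma supp_E (L : ℕ) (s : Fin L → Bool) : (Function.support (⇑(Efn L s))).Finite := by
  apply Set.Finite.subset (Set.finite_singleton (en L s))
  intro n hn
  rw [Function.mem_support, E_apply] at hn
  by_contra hne
  simp only [Set.mem_singleton_iff] at hne
  rw [if_neg hne] at hn
  exact hn rfl

lemma supp_W (L : ℕ) (k : Fin L → Bool) : (Function.support (⇑(Wfn L k))).Finite := by
  apply Set.Finite.subset ((Finset.image (en L) Finset.univ).finite_toSet)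
  intro n hn
  rw [Function.mem_support] at hn
  rcases hdec : dec L n with _ | s
  · exact absurd (W_apply_none L k hdec) hn
  · obtain rfl := en_of_dec hdec
    simp


lemma xfE_coords (L : ℕ) (t : Fin L → Bool) (n : ℕ) :
    (Finsupp.single (en L t) (1:ℂ)) n = (Efn L t) n := by
  rw [E_apply, Finsupp.single_apply]
  split_ifs with h1 h2 h2 <;> simp_all [eq_comm]

lemma kxE_coords (L : ℕ) (t : Fin L → Bool) (n : ℕ) :
    (0 : Hsp) n = kaltonPeckSeq (Efn L t) n := by
  rw [lp.coeFn_zero, Pi.zero_apply, kp_E]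


lemma exists_qf (L : ℕ) (C : ℝ)
    (d : (Hsp ≃ₗᵢ[ℂ] Hsp) → ((ℕ →₀ ℂ) →ₗ[ℂ] (ℕ → ℂ)))
    (h : ∀ (u : Hsp ≃ₗᵢ[ℂ] Hsp) (x kx : Hsp) (xf : ℕ →₀ ℂ),
        (Function.support (x : ℕ → ℂ)).Finite → ‖x‖ = 1 →
        (∀ n, xf n = x n) → (∀ n, kx n = kaltonPeckSeq x n) →
        ∃ q : Hsp, (∀ n, q n = u kx n - kaltonPeckSeq (u x) n + d u xf n) ∧ ‖q‖ ≤ C)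
    (t : Fin L → Bool) :
    ∃ q : Hsp, (∀ n, d (U L) (Finsupp.single (en L t) 1) n
      = q n + (Real.log (cL L) : ℂ) * (Wfn L t) n) ∧ ‖q‖ ≤ C := by
  obtain ⟨q, h1, h2⟩ := h (U L) (Efn L t) 0 (Finsupp.single (en L t) 1)
    (supp_E L t) (norm_E L t) (xfE_coords L t) (kxE_coords L t)
  refine ⟨q, fun n => ?_, h2⟩
  have h3 := h1 n
  rw [map_zero, lp.coeFn_zero, Pi.zero_apply] at h3
  have h4 : kaltonPeckSeq ((U L) (Efn L t)) n = (Real.log (cL L) : ℂ) * (Wfn L t) n :=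
    kp_W L t n
  rw [h4] at h3
  rw [h3]
  ring


def xfW (L : ℕ) (k : Fin L → Bool) : ℕ →₀ ℂ :=
  ∑ t, Finsupp.single (en L t) ((cL L : ℂ) * (hd k t : ℂ))

lemma xfW_coords (L : ℕ) (k : Fin L → Bool) (n : ℕ) :
    (xfW L k) n = (Wfn L k) n := by
  unfold xfW
  rw [Finsupp.coe_finset_sum, Finset.sum_apply]
  rcases hdec : dec L n with _ | s
  · rw [W_apply_none L k hdec]
    apply Finset.sum_eq_zero
    intro t _
    rw [Finsupp.single_apply, if_neg (fun hh => (ne_en_of_dec_none hdec t) hh.symm)]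
  · obtain rfl := en_of_dec hdec
    rw [W_apply_en, hd_symm s k]
    have hterm : ∀ t, (Finsupp.single (en L t) ((cL L : ℂ) * (hd k t : ℂ))) (en L s)
        = if t = s then (cL L : ℂ) * (hd k t : ℂ) else 0 := by
      intro t
      rw [Finsupp.single_apply]
      simp only [(en_inj L).eq_iff]
    rw [Finset.sum_congr rfl fun t _ => hterm t, Finset.sum_ite_eq' Finset.univ s]
    simp

lemma kxW_coords (L : ℕ) (k : Fin L → Bool) (n : ℕ) :
    ((Real.log (cL L) : ℂ) • Wfn L k) n = kaltonPeckSeq (Wfn L k) n := by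
  rw [lp.coeFn_smul, Pi.smul_apply, smul_eq_mul, kp_W]

lemma d_xfW (L : ℕ) (k : Fin L → Bool) (d' : (ℕ →₀ ℂ) →ₗ[ℂ] (ℕ → ℂ)) (n : ℕ) :
    d' (xfW L k) n = ∑ t, (cL L : ℂ) * (hd k t : ℂ) * (d' (Finsupp.single (en L t) 1) n) := by
  unfold xfW
  rw [map_sum, Finset.sum_apply]
  refine Finset.sum_congr rfl fun t _ => ?_
  have h1 : Finsupp.single (en L t) ((cL L : ℂ) * (hd k t : ℂ))
      = ((cL L : ℂ) * (hd k t : ℂ)) • Finsupp.single (en L t) (1 : ℂ) := by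
    rw [Finsupp.smul_single', mul_one]
  rw [h1, map_smul, Pi.smul_apply, smul_eq_mul]


lemma exists_Qf (L : ℕ) (C : ℝ)
    (d : (Hsp ≃ₗᵢ[ℂ] Hsp) → ((ℕ →₀ ℂ) →ₗ[ℂ] (ℕ → ℂ)))
    (h : ∀ (u : Hsp ≃ₗᵢ[ℂ] Hsp) (x kx : Hsp) (xf : ℕ →₀ ℂ),
        (Function.support (x : ℕ → ℂ)).Finite → ‖x‖ = 1 →
        (∀ n, xf n = x n) → (∀ n, kx n = kaltonPeckSeq x n) →
        ∃ q : Hsp, (∀ n, q n = u kx n - kaltonPeckSeq (u x) n + d u xf n) ∧ ‖q‖ ≤ C)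
    (qf : (Fin L → Bool) → Hsp)
    (hd1 : ∀ t n, d (U L) (Finsupp.single (en L t) 1) n
      = qf t n + (Real.log (cL L) : ℂ) * (Wfn L t) n)
    (k : Fin L → Bool) :
    ∃ Q : Hsp, Q = ((2 * Real.log (cL L) : ℝ) : ℂ) • Efn L k
        + (cL L : ℂ) • (∑ t, (hd k t : ℂ) • qf t) ∧ ‖Q‖ ≤ C := by
  obtain ⟨Q, h1, h2⟩ := h (U L) (Wfn L k) ((Real.log (cL L) : ℂ) • Wfn L k) (xfW L k)
    (supp_W L k) (norm_W L k) (xfW_coords L k) (kxW_coords L k)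
  refine ⟨Q, ?_, h2⟩
  apply lp.ext; funext n
  have h3 := h1 n
  have hUW : (U L) (Wfn L k) = Efn L k := UW L k
  rw [map_smul, hUW, kp_E, d_xfW] at h3
  have h4 : ∑ t, (cL L : ℂ) * (hd k t : ℂ) * (d (U L) (Finsupp.single (en L t) 1) n)
      = ((cL L : ℂ) * ∑ t, (hd k t : ℂ) * qf t n)
        + (Real.log (cL L) : ℂ) * ∑ t, (cL L : ℂ) * (hd k t : ℂ) * (Wfn L t) n := by
    rw [Finset.sum_congr rfl fun t (_ : t ∈ Finset.univ) => by rw [hd1 t n]]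
    rw [Finset.mul_sum, Finset.mul_sum]
    rw [← Finset.sum_add_distrib]
    refine Finset.sum_congr rfl fun t _ => ?_
    ring
  rw [h4, sum_cW] at h3
  rw [h3]
  rw [lp.coeFn_add, Pi.add_apply, lp.coeFn_smul, lp.coeFn_smul, Pi.smul_apply, Pi.smul_apply,
    smul_eq_mul, smul_eq_mul, lp.coeFn_smul, Pi.smul_apply, smul_eq_mul, sum_apply']
  have h5 : ∑ t, ((hd k t : ℂ) • qf t) n = ∑ t, (hd k t : ℂ) * qf t n := by
    refine Finset.sum_congr rfl fun t _ => ?_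
    rw [lp.coeFn_smul, Pi.smul_apply, smul_eq_mul]
  rw [h5]
  push_cast
  ring


end Stmt13Aux

open Stmt13Aux in
/-- the natural action of the unitary group of `ℓ₂` is not compatible
with the Kalton–Peck map: there are no constant `C ≥ 0` and assignment of linear maps
`d_u : c₀₀ → ℂ^ℕ` such that `u(K x) − K(u x) + d_u(x)` is always in `ℓ₂` with norm
at most `C`, for all unitaries `u` and all norm-one finitely supported `x`. -/
theorem stmt_13 :
    ¬ ∃ (C : ℝ)
        (d : (lp (fun _ : ℕ => ℂ) 2 ≃ₗᵢ[ℂ] lp (fun _ : ℕ => ℂ) 2) →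
          ((ℕ →₀ ℂ) →ₗ[ℂ] (ℕ → ℂ))),
      0 ≤ C ∧
      ∀ (u : lp (fun _ : ℕ => ℂ) 2 ≃ₗᵢ[ℂ] lp (fun _ : ℕ => ℂ) 2)
        (x kx : lp (fun _ : ℕ => ℂ) 2) (xf : ℕ →₀ ℂ),
        (Function.support (x : ℕ → ℂ)).Finite → ‖x‖ = 1 →
        (∀ n, xf n = x n) →
        (∀ n, kx n = kaltonPeckSeq x n) →
        ∃ q : lp (fun _ : ℕ => ℂ) 2,
          (∀ n, q n = u kx n - kaltonPeckSeq (u x) n + d u xf n) ∧ ‖q‖ ≤ C := by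

  rintro ⟨C, d, hC, h⟩
  obtain ⟨L, hL⟩ : ∃ L : ℕ, 2 * C < L * Real.log 2 := by
    obtain ⟨m, hm⟩ := exists_nat_gt ((2 * C) / Real.log 2)
    refine ⟨m, ?_⟩
    rwa [div_lt_iff₀ (Real.log_pos one_lt_two)] at hm
  have hlog2 : (0:ℝ) ≤ Real.log 2 := Real.log_nonneg one_le_two
  choose qf hqf hqfC using exists_qf L C d h
  choose Qf hQf hQfC using exists_Qf L C d h qf hqf
  set S : (Fin L → Bool) → Hsp := fun k => ∑ t, (hd k t : ℂ) • qf t with hS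
  have hcard : (Finset.univ : Finset (Fin L → Bool)).card = 2 ^ L := by
    rw [Finset.card_univ, Fintype.card_fun]
    simp
  have hkey : ∀ k, (L : ℝ) * Real.log 2 ≤ C + cL L * ‖S k‖ := by
    intro k
    have h1 : ((2 * Real.log (cL L) : ℝ) : ℂ) • Efn L k
        = Qf k - (cL L : ℂ) • S k := by
      rw [hQf k, hS]; abel
    have h2 : ‖((2 * Real.log (cL L) : ℝ) : ℂ) • Efn L k‖ ≤ C + cL L * ‖S k‖ := by
      rw [h1]
      refine le_trans (norm_sub_le _ _) ?_
      have h3 : ‖(cL L : ℂ) • S k‖ = cL L * ‖S k‖ := by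
        rw [norm_smul, Complex.norm_real, Real.norm_eq_abs, abs_of_pos (cL_pos L)]
      rw [h3]
      exact add_le_add (hQfC k) le_rfl
    rw [norm_smul, Complex.norm_real, Real.norm_eq_abs, norm_E, mul_one] at h2
    have h4 : |2 * Real.log (cL L)| = (L : ℝ) * Real.log 2 := by
      rw [log_cL]
      have h5 : 2 * (-((L : ℝ) * Real.log 2) / 2) = -((L : ℝ) * Real.log 2) := by ring
      rw [h5, abs_neg, abs_of_nonneg (mul_nonneg (Nat.cast_nonneg L) hlog2)]
    rwa [h4] at h2
  have hpar : ∑ k, ‖S k‖ ^ 2 = 2 ^ L * ∑ t, ‖qf t‖ ^ 2 := parseval qf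
  have hsumq : ∑ t, ‖qf t‖ ^ 2 ≤ 2 ^ L * C ^ 2 := by
    calc ∑ t, ‖qf t‖ ^ 2 ≤ ∑ _t : Fin L → Bool, C ^ 2 :=
          Finset.sum_le_sum fun t _ => by nlinarith [hqfC t, norm_nonneg (qf t)]
      _ = 2 ^ L * C ^ 2 := by
          rw [Finset.sum_const, hcard, nsmul_eq_mul]
          push_cast
          ring
  obtain ⟨k, hk⟩ : ∃ k, ‖S k‖ ^ 2 ≤ 2 ^ L * C ^ 2 := by
    by_contra hcon
    push_neg at hcon
    have hlt : ∑ _k : Fin L → Bool, (2 ^ L * C ^ 2 : ℝ) < ∑ k, ‖S k‖ ^ 2 :=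
      Finset.sum_lt_sum_of_nonempty Finset.univ_nonempty fun k _ => hcon k
    rw [Finset.sum_const, hcard, nsmul_eq_mul] at hlt
    push_cast at hlt
    have hdbl : (2:ℝ) ^ L * ∑ t, ‖qf t‖ ^ 2 ≤ 2 ^ L * (2 ^ L * C ^ 2) :=
      mul_le_mul_of_nonneg_left hsumq (by positivity)
    rw [← hpar] at hdbl
    linarith
  have hcS : cL L * ‖S k‖ ≤ C := by
    have hc2 : (cL L) ^ 2 * (2 ^ L * C ^ 2) = C ^ 2 := by
      have := cL_sq L
      nlinarith
    have h1 : (cL L * ‖S k‖) ^ 2 ≤ C ^ 2 := by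
      calc (cL L * ‖S k‖) ^ 2 = (cL L) ^ 2 * ‖S k‖ ^ 2 := by ring
        _ ≤ (cL L) ^ 2 * (2 ^ L * C ^ 2) := by
            exact mul_le_mul_of_nonneg_left hk (sq_nonneg _)
        _ = C ^ 2 := hc2
    have h2 := Real.sqrt_le_sqrt h1
    rwa [Real.sqrt_sq (mul_nonneg (cL_pos L).le (norm_nonneg _)), Real.sqrt_sq hC] at h2
  have := hkey k
  linarith
end
end

section
/- Let H and H' be real (or complex) Hilbert spaces, let C ≥ 0, and let B : H → H' be any map satisfying ‖B x‖ ≤ C‖x‖ for all x ∈ H. Then for every orthonormal family x₁,…,xₙ in H, the average over all 2ⁿ choices of signs satisfies: 2^{-n} ∑_{ε∈{−1,1}ⁿ} ‖B(ε₁x₁ + ⋯ + εₙxₙ) − (ε₁ B(x₁) + ⋯ + εₙ B(xₙ))‖ ≤ 2C√n. -/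
open Finset

private lemma sign_flip {𝕜 : Type*} [RCLike 𝕜] (b : Bool) :
    (if !b then (1:𝕜) else -1) = -(if b then (1:𝕜) else -1) := by
  cases b <;> simp

private lemma conj_sign {𝕜 : Type*} [RCLike 𝕜] (b : Bool) :
    (starRingEnd 𝕜) (if b then (1:𝕜) else -1) = if b then (1:𝕜) else -1 := by
  cases b <;> simp

private lemma rad_sum_ne {𝕜 : Type*} [RCLike 𝕜] {n : ℕ} {i j : Fin n} (hij : i ≠ j) :
    ∑ ε : Fin n → Bool, (if ε i then (1:𝕜) else -1) * (if ε j then (1:𝕜) else -1) = 0 := by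
  set f : (Fin n → Bool) → 𝕜 :=
    fun ε => (if ε i then (1:𝕜) else -1) * (if ε j then (1:𝕜) else -1) with hf
  have he : Function.Involutive (fun ε : Fin n → Bool => Function.update ε i (!(ε i))) := by
    intro ε
    funext k
    by_cases hk : k = i
    · subst hk; simp
    · simp [Function.update_of_ne hk]
  have h1 : ∑ ε : Fin n → Bool, f ((he.toPerm _) ε) = ∑ ε : Fin n → Bool, f ε :=
    Equiv.sum_comp (he.toPerm _) f
  have h2 : ∀ ε : Fin n → Bool, f ((he.toPerm _) ε) = - f ε := by
    intro ε
    have hji : (Function.update ε i (!(ε i))) j = ε j := Function.update_of_ne hij.symm _ _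
    have hii : (Function.update ε i (!(ε i))) i = !(ε i) := Function.update_self _ _ _
    simp only [hf, Function.Involutive.coe_toPerm, hji, hii, sign_flip, neg_mul]
  rw [Finset.sum_congr rfl (fun ε _ => h2 ε), Finset.sum_neg_distrib] at h1
  linear_combination (-(1:𝕜)/2) * h1

private lemma sum_norm_sq_rad {𝕜 H : Type*} [RCLike 𝕜] [NormedAddCommGroup H]
    [InnerProductSpace 𝕜 H] {n : ℕ} (y : Fin n → H) :
    ∑ ε : Fin n → Bool, ‖∑ i, (if ε i then (1:𝕜) else -1) • y i‖^2
      = 2^n * ∑ i, ‖y i‖^2 := by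
  have key : ∀ ε : Fin n → Bool,
      (‖∑ i, (if ε i then (1:𝕜) else -1) • y i‖^2 : ℝ)
        = RCLike.re (∑ i, ∑ j, ((if ε i then (1:𝕜) else -1) * (if ε j then (1:𝕜) else -1))
            * (inner 𝕜 (y i) (y j) : 𝕜)) := by
    intro ε
    rw [← inner_self_eq_norm_sq (𝕜 := 𝕜)]
    congr 1
    rw [sum_inner]
    refine Finset.sum_congr rfl fun i _ => ?_
    rw [inner_sum]
    refine Finset.sum_congr rfl fun j _ => ?_
    rw [inner_smul_left, inner_smul_right, conj_sign]
    ring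
  calc ∑ ε : Fin n → Bool, ‖∑ i, (if ε i then (1:𝕜) else -1) • y i‖^2
      = RCLike.re (∑ i, ∑ j, (∑ ε : Fin n → Bool,
          (if ε i then (1:𝕜) else -1) * (if ε j then (1:𝕜) else -1)) * (inner 𝕜 (y i) (y j) : 𝕜)) := by
        rw [Finset.sum_congr rfl (fun ε _ => key ε), ← map_sum]
        congr 1
        rw [Finset.sum_comm]
        refine Finset.sum_congr rfl fun i _ => ?_
        rw [Finset.sum_comm]
        refine Finset.sum_congr rfl fun j _ => ?_
        rw [← Finset.sum_mul]
    _ = 2^n * ∑ i, ‖y i‖^2 := by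
        have : ∀ i : Fin n, ∑ j, (∑ ε : Fin n → Bool,
            (if ε i then (1:𝕜) else -1) * (if ε j then (1:𝕜) else -1)) * (inner 𝕜 (y i) (y j) : 𝕜)
              = (2^n : 𝕜) * (inner 𝕜 (y i) (y i) : 𝕜) := by
          intro i
          rw [Finset.sum_eq_single i]
          · congr 1
            have : ∀ ε : Fin n → Bool,
                (if ε i then (1:𝕜) else -1) * (if ε i then (1:𝕜) else -1) = 1 := by
              intro ε; cases h : ε i <;> simp
            rw [Finset.sum_congr rfl (fun ε _ => this ε)]
            simp [Finset.card_univ]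
          · intro j _ hji
            rw [rad_sum_ne (Ne.symm hji), zero_mul]
          · simp
        rw [Finset.sum_congr rfl (fun i _ => this i), map_sum]
        have h5 : ∀ i : Fin n, RCLike.re ((2^n : 𝕜) * (inner 𝕜 (y i) (y i) : 𝕜))
            = 2^n * ‖y i‖^2 := by
          intro i
          rw [inner_self_eq_norm_sq_to_K,
            show ((2:𝕜)^n * ((‖y i‖ : 𝕜))^2) = (((2^n * ‖y i‖^2 : ℝ)) : 𝕜) by push_cast; ring,
            RCLike.ofReal_re]
        rw [Finset.sum_congr rfl (fun i _ => h5 i), ← Finset.mul_sum]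

/-- if `B : H → H'` is any map between Hilbert spaces with
`‖Bx‖ ≤ C‖x‖`, then for every orthonormal family `x₁,…,xₙ` the average over all
`2ⁿ` sign choices of `‖B(∑ εᵢxᵢ) − ∑ εᵢ B(xᵢ)‖` is at most `2C√n`. -/
theorem stmt_15 {𝕜 H H' : Type*} [RCLike 𝕜]
    [NormedAddCommGroup H] [InnerProductSpace 𝕜 H] [CompleteSpace H]
    [NormedAddCommGroup H'] [InnerProductSpace 𝕜 H'] [CompleteSpace H']
    (C : ℝ) (hC : 0 ≤ C) (B : H → H') (hB : ∀ x : H, ‖B x‖ ≤ C * ‖x‖)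
    (n : ℕ) (x : Fin n → H) (hx : Orthonormal 𝕜 x) :
    (2 ^ n : ℝ)⁻¹ * ∑ ε : Fin n → Bool,
        ‖B (∑ i, (if ε i then (1 : 𝕜) else -1) • x i)
          - ∑ i, (if ε i then (1 : 𝕜) else -1) • B (x i)‖
      ≤ 2 * C * Real.sqrt n := by
  set s : Bool → 𝕜 := fun b => if b then (1:𝕜) else -1 with hs
  -- norm of the signed sum of x's
  have hnormS : ∀ ε : Fin n → Bool, ‖∑ i, s (ε i) • x i‖ = Real.sqrt n := by
    intro ε
    have h1 : (inner 𝕜 (∑ i, s (ε i) • x i) (∑ i, s (ε i) • x i) : 𝕜) = (n : 𝕜) := by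
      rw [hx.inner_sum]
      have : ∀ i : Fin n, (starRingEnd 𝕜) (s (ε i)) * s (ε i) = 1 := by
        intro i; rw [hs]; cases h : ε i <;> simp
      rw [Finset.sum_congr rfl (fun i _ => this i)]
      simp
    have h2 : ‖∑ i, s (ε i) • x i‖^2 = (n : ℝ) := by
      rw [← inner_self_eq_norm_sq (𝕜 := 𝕜), h1]
      simp
    rw [← Real.sqrt_sq (norm_nonneg _), h2]
  -- bound on the first term
  have hBS : ∀ ε : Fin n → Bool, ‖B (∑ i, s (ε i) • x i)‖ ≤ C * Real.sqrt n := by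
    intro ε
    calc ‖B (∑ i, s (ε i) • x i)‖ ≤ C * ‖∑ i, s (ε i) • x i‖ := hB _
      _ = C * Real.sqrt n := by rw [hnormS]
  -- average bound on the second term via Cauchy-Schwarz
  have hBx : ∀ i, ‖B (x i)‖ ≤ C := by
    intro i
    calc ‖B (x i)‖ ≤ C * ‖x i‖ := hB _
      _ = C := by rw [hx.1 i]; ring
  have hsumsq : ∑ ε : Fin n → Bool, ‖∑ i, s (ε i) • B (x i)‖^2 ≤ 2^n * (n * C^2) := by
    simp only [hs]
    rw [sum_norm_sq_rad (𝕜 := 𝕜) (fun i => B (x i))]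
    have hle : ∑ i : Fin n, ‖B (x i)‖^2 ≤ n * C^2 := by
      calc ∑ i : Fin n, ‖B (x i)‖^2 ≤ ∑ _i : Fin n, C^2 := by
            refine Finset.sum_le_sum fun i _ => ?_
            exact pow_le_pow_left₀ (norm_nonneg _) (hBx i) 2
        _ = n * C^2 := by simp [mul_comm]
    exact mul_le_mul_of_nonneg_left hle (by positivity)
  have hT : ∑ ε : Fin n → Bool, ‖∑ i, s (ε i) • B (x i)‖ ≤ 2^n * (C * Real.sqrt n) := by
    have hcs := Finset.sum_mul_sq_le_sq_mul_sq Finset.univ (fun _ : Fin n → Bool => (1:ℝ))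
      (fun ε => ‖∑ i, s (ε i) • B (x i)‖)
    simp only [one_mul, one_pow, Finset.sum_const, Finset.card_univ, Fintype.card_fun,
      Fintype.card_bool, Fintype.card_fin, nsmul_eq_mul, smul_eq_mul, mul_one,
      Nat.cast_pow, Nat.cast_ofNat] at hcs
    have h3 : (∑ ε : Fin n → Bool, ‖∑ i, s (ε i) • B (x i)‖)^2 ≤ (2^n * (C * Real.sqrt n))^2 := by
      calc (∑ ε : Fin n → Bool, ‖∑ i, s (ε i) • B (x i)‖)^2
          ≤ 2^n * ∑ ε : Fin n → Bool, ‖∑ i, s (ε i) • B (x i)‖^2 := hcs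
        _ ≤ 2^n * (2^n * (n * C^2)) := by gcongr
        _ = (2^n * (C * Real.sqrt n))^2 := by
            rw [mul_pow, mul_pow, Real.sq_sqrt (Nat.cast_nonneg n)]
            ring
    have h4 : (0:ℝ) ≤ 2^n * (C * Real.sqrt n) := by positivity
    have hSnn : (0:ℝ) ≤ ∑ ε : Fin n → Bool, ‖∑ i, s (ε i) • B (x i)‖ :=
      Finset.sum_nonneg fun ε _ => norm_nonneg _
    nlinarith [h3, h4, hSnn]
  -- combine
  have htotal : ∑ ε : Fin n → Bool,
      ‖B (∑ i, s (ε i) • x i) - ∑ i, s (ε i) • B (x i)‖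
        ≤ 2^n * (2 * C * Real.sqrt n) := by
    calc ∑ ε : Fin n → Bool, ‖B (∑ i, s (ε i) • x i) - ∑ i, s (ε i) • B (x i)‖
        ≤ ∑ ε : Fin n → Bool, (C * Real.sqrt n + ‖∑ i, s (ε i) • B (x i)‖) := by
          gcongr with ε
          calc ‖B (∑ i, s (ε i) • x i) - ∑ i, s (ε i) • B (x i)‖
              ≤ ‖B (∑ i, s (ε i) • x i)‖ + ‖∑ i, s (ε i) • B (x i)‖ := norm_sub_le _ _
            _ ≤ C * Real.sqrt n + ‖∑ i, s (ε i) • B (x i)‖ := by gcongr; exact hBS ε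
      _ = 2^n * (C * Real.sqrt n) + ∑ ε : Fin n → Bool, ‖∑ i, s (ε i) • B (x i)‖ := by
          rw [Finset.sum_add_distrib, Finset.sum_const, Finset.card_univ]
          simp [mul_comm]
      _ ≤ 2^n * (C * Real.sqrt n) + 2^n * (C * Real.sqrt n) := by gcongr
      _ = 2^n * (2 * C * Real.sqrt n) := by ring
  have h2n : (0:ℝ) < 2^n := by positivity
  simp only [hs] at htotal
  rw [inv_mul_le_iff₀ h2n]
  linarith [htotal]
end

section
/- Let Z be a Banach space, X a closed subspace, and T a bounded linear operator on Z such that: T(X) ⊆ X; T(T x) = −x for every x ∈ X; and T(T z) + z ∈ X for every z ∈ Z (so T extends a complex structure u on X and induces a complex structure v on Z/X). Then the bounded operator R := (T³ + 3T)/2 satisfies: R ∘ R = −id_Z (R is a complex structure on Z), R(X) ⊆ X, R x = T x for every x ∈ X, and R z − T z ∈ X for every z ∈ Z (so R extends u and induces v on Z/X). Thus if compatible complex structures u and v admit a bounded extension on a twisted sum, they admit a bounded extension which is itself a complex structure. -/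
/-- if `T` is a bounded operator on `Z` preserving a closed subspace
`X`, with `T² = −id` on `X` and `T² + id` mapping into `X` (so `T` extends a complex
structure on `X` and induces one on `Z/X`), then `R := (T³ + 3T)/2` is a complex
structure on `Z` which agrees with `T` on `X` and induces the same map on `Z/X`. -/
theorem stmt_16 {Z : Type*} [NormedAddCommGroup Z] [NormedSpace ℝ Z] [CompleteSpace Z]
    (X : Submodule ℝ Z) (hXc : IsClosed (X : Set Z))
    (T : Z →L[ℝ] Z)
    (hTX : ∀ x ∈ X, T x ∈ X)
    (hTsq : ∀ x ∈ X, T (T x) = -x)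
    (hquot : ∀ z : Z, T (T z) + z ∈ X) :
    ∃ R : Z →L[ℝ] Z,
      (∀ z : Z, R z = (2⁻¹ : ℝ) • (T (T (T z)) + (3 : ℝ) • T z)) ∧
      (∀ z : Z, R (R z) = -z) ∧
      (∀ x ∈ X, R x ∈ X) ∧
      (∀ x ∈ X, R x = T x) ∧
      (∀ z : Z, R z - T z ∈ X) := by
  set R : Z →L[ℝ] Z := (2⁻¹ : ℝ) • (T.comp (T.comp T) + (3 : ℝ) • T) with hR
  have hRz : ∀ z : Z, R z = (2⁻¹ : ℝ) • (T (T (T z)) + (3 : ℝ) • T z) := by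
    intro z; simp [hR]
  have key : ∀ z : Z, R z = T z + (2⁻¹ : ℝ) • T (T (T z) + z) := by
    intro z; rw [hRz, map_add]; module
  have hRX : ∀ x ∈ X, R x = T x := by
    intro x hx
    rw [hRz, hTsq (T x) (hTX x hx)]
    module
  have hRmem : ∀ x ∈ X, R x ∈ X := fun x hx => (hRX x hx) ▸ hTX x hx
  have hdiff : ∀ z : Z, R z - T z ∈ X := by
    intro z
    have : R z - T z = (2⁻¹ : ℝ) • T (T (T z) + z) := by rw [key]; abel
    rw [this]
    exact X.smul_mem _ (hTX _ (hquot z))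
  refine ⟨R, hRz, ?_, hRmem, hRX, hdiff⟩
  intro z
  set s := T (T z) + z with hsdef
  have hs : s ∈ X := hquot z
  have hTs : T s ∈ X := hTX s hs
  have h1 : R z = T z + (2⁻¹ : ℝ) • T s := key z
  have h2 : R (T s) = T (T s) := hRX _ hTs
  have h3 : T (T s) = -s := hTsq s hs
  have h4 : R (T z) = T (T z) + (2⁻¹ : ℝ) • T (T s) := by
    rw [key (T z)]
    congr 2
    rw [hsdef, map_add, map_add, map_add]
  calc R (R z) = R (T z) + (2⁻¹ : ℝ) • R (T s) := by rw [h1, map_add, map_smul]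
    _ = (T (T z) + (2⁻¹ : ℝ) • (-s)) + (2⁻¹ : ℝ) • (-s) := by rw [h4, h2, h3]
    _ = T (T z) - s := by module
    _ = -z := by rw [hsdef]; abel
end

section
/- Let c₀ be the Banach space of real sequences converging to 0 with the sup norm, and let G be the group of sequences ε : ℕ → {−1,1} with εᵢ = 1 for all but finitely many i, under pointwise multiplication. For ε ∈ G let S(ε) = {i : εᵢ = −1} and define T_ε on the Banach space c₀ × ℝ (with norm ‖(x,t)‖ = ‖x‖_∞ + |t|) by T_ε(x, t) = (ε·x + t·𝟙_{S(ε)}, t), where ε·x is the pointwise product and 𝟙_{S(ε)} ∈ c₀ is the indicator sequence of the finite set S(ε). Then: (1) ε ↦ T_ε is a group homomorphism into the bounded invertible operators on c₀ × ℝ, with T_ε ∘ T_ε = id and ‖T_ε‖ ≤ 2 for every ε ∈ G, and each T_ε maps the subspace c₀ × {0} into itself; (2) the projection π(x,t) = t admits no G-equivariant linear section: there is no linear map s : ℝ → c₀ × ℝ with π ∘ s = id_ℝ and T_ε ∘ s = s for all ε ∈ G; equivalently, there is no x₀ ∈ c₀ with ε·x₀ + 𝟙_{S(ε)} = x₀ for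 all ε ∈ G. Hence the exact sequence 0 → c₀ → c₀ × ℝ → ℝ → 0 of G-spaces splits in the Banach space category but does not G-split (Ext_G(ℝ, c₀) ≠ 0). -/
open Filter

lemma aux_exists (ε : ℕ → ℝ) (hε : ∀ n, ε n = 1 ∨ ε n = -1)
    (hfin : {n | ε n = -1}.Finite) (y : ZeroAtInftyContinuousMap ℕ ℝ) (t : ℝ) :
    ∃ z : ZeroAtInftyContinuousMap ℕ ℝ,
      ∀ n, z n = ε n * y n + t * (if ε n = -1 then 1 else 0) := by
  refine ⟨⟨⟨fun n => ε n * y n + t * (if ε n = -1 then 1 else 0),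
    continuous_of_discreteTopology⟩, ?_⟩, fun n => rfl⟩
  have hmem : {n | ε n = -1}ᶜ ∈ cocompact ℕ := by
    rw [Filter.mem_cocompact]
    exact ⟨_, hfin.isCompact, subset_rfl⟩
  have hev : (y : ℕ → ℝ) =ᶠ[cocompact ℕ]
      fun n => ε n * y n + t * (if ε n = -1 then 1 else 0) := by
    filter_upwards [hmem] with n hn
    have h1 : ε n = 1 := (hε n).resolve_right hn
    norm_num [h1]
  exact (y.zero_at_infty').congr' hev

lemma aux_no_fixed :
    ¬ ∃ x₀ : ZeroAtInftyContinuousMap ℕ ℝ,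
      ∀ ε : ℕ → ℝ, (∀ n, ε n = 1 ∨ ε n = -1) → {n | ε n = -1}.Finite →
        ∀ n, ε n * x₀ n + (if ε n = -1 then 1 else 0) = x₀ n := by
  rintro ⟨x₀, hx⟩
  have hval : ∀ m : ℕ, x₀ m = 1 / 2 := by
    intro m
    set ε : ℕ → ℝ := fun n => if n = m then -1 else 1 with hεdef
    have hε : ∀ n, ε n = 1 ∨ ε n = -1 := by
      intro n; by_cases h : n = m <;> simp [hεdef, h]
    have hfin : {n | ε n = -1}.Finite := by
      apply Set.Finite.subset (Set.finite_singleton m)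
      intro n hn
      by_contra h
      simp only [Set.mem_singleton_iff] at h
      simp only [hεdef, Set.mem_setOf_eq, if_neg h] at hn
      norm_num at hn
    have := hx ε hε hfin m
    simp only [hεdef, if_pos rfl] at this
    norm_num at this
    linarith
  have h1 : Tendsto (x₀ : ℕ → ℝ) (cocompact ℕ) (nhds 0) := x₀.zero_at_infty'
  have h2 : Tendsto (x₀ : ℕ → ℝ) (cocompact ℕ) (nhds (1/2)) := by
    have : (x₀ : ℕ → ℝ) = fun _ => (1/2 : ℝ) := funext hval
    rw [this]; exact tendsto_const_nhds
  have := tendsto_nhds_unique h1 h2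
  norm_num at this

lemma aux_norm (ε : ℕ → ℝ) (hε : ∀ n, ε n = 1 ∨ ε n = -1)
    (y z : ZeroAtInftyContinuousMap ℕ ℝ) (t : ℝ)
    (hz : ∀ n, z n = ε n * y n + t * (if ε n = -1 then 1 else 0)) :
    ‖z‖ + |t| ≤ 2 * (‖y‖ + |t|) := by
  have hynorm : ∀ n, |y n| ≤ ‖y‖ := by
    intro n
    have := y.toBCF.norm_coe_le_norm n
    rwa [ZeroAtInftyContinuousMap.norm_toBCF_eq_norm] at this
  have hzn : ‖z‖ ≤ ‖y‖ + |t| := by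
    rw [← ZeroAtInftyContinuousMap.norm_toBCF_eq_norm]
    apply BoundedContinuousFunction.norm_le (by positivity) |>.2
    intro n
    have hεabs : |ε n| = 1 := by rcases hε n with h | h <;> simp [h]
    have : |z n| ≤ |y n| + |t| := by
      rw [hz n]
      calc |ε n * y n + t * (if ε n = -1 then 1 else 0)|
          ≤ |ε n * y n| + |t * (if ε n = -1 then 1 else 0)| := abs_add_le _ _
        _ ≤ |y n| + |t| := by
            rw [abs_mul, abs_mul, hεabs, one_mul]
            gcongr
            split <;> simp
    calc ‖z n‖ = |z n| := rfl
      _ ≤ |y n| + |t| := this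
      _ ≤ ‖y‖ + |t| := by linarith [hynorm n]
  have : (0:ℝ) ≤ ‖y‖ := norm_nonneg y
  have : (0:ℝ) ≤ |t| := abs_nonneg t
  linarith



/-- the sign-change group `G = {ε : ℕ → {−1,1} : εᵢ = 1 eventually}`
acts on `c₀ × ℝ` (with norm `‖x‖∞ + |t|`) by `T_ε(x,t) = (ε·x + t·𝟙_{S(ε)}, t)`.
This is a uniformly bounded (by 2) involutive representation preserving `c₀ × {0}`,
giving an exact sequence `0 → c₀ → c₀ × ℝ → ℝ → 0` of `G`-spaces which splits in the
Banach space category but admits no `G`-equivariant linear section, hence does not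
`G`-split: `Ext_G(ℝ, c₀) ≠ 0`. Here `c₀ = C₀(ℕ,ℝ)` and `T_ε` is described through
the pointwise formula for its first coordinate. -/
theorem stmt_19 :
    -- (1) T_ε is well defined on c₀ × ℝ: ε·x + t·𝟙_{S(ε)} lies in c₀ ...
    (∀ ε : ℕ → ℝ, (∀ n, ε n = 1 ∨ ε n = -1) → {n | ε n = -1}.Finite →
      ∀ (y : ZeroAtInftyContinuousMap ℕ ℝ) (t : ℝ),
        ∃ z : ZeroAtInftyContinuousMap ℕ ℝ,
          ∀ n, z n = ε n * y n + t * (if ε n = -1 then 1 else 0)) ∧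
    -- ... it preserves the subspace c₀ × {0}, on which it acts by ε·x ...
    (∀ ε : ℕ → ℝ, (∀ n, ε n = 1 ∨ ε n = -1) → {n | ε n = -1}.Finite →
      ∀ y : ZeroAtInftyContinuousMap ℕ ℝ,
        ∃ z : ZeroAtInftyContinuousMap ℕ ℝ, ∀ n, z n = ε n * y n) ∧
    -- ... ε ↦ T_ε is multiplicative: T_{ε·ε'} = T_ε ∘ T_{ε'} ...
    (∀ ε ε' : ℕ → ℝ, (∀ n, ε n = 1 ∨ ε n = -1) → {n | ε n = -1}.Finite →
      (∀ n, ε' n = 1 ∨ ε' n = -1) → {n | ε' n = -1}.Finite →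
      ∀ (y z z' z'' : ZeroAtInftyContinuousMap ℕ ℝ) (t : ℝ),
        (∀ n, z n = ε' n * y n + t * (if ε' n = -1 then 1 else 0)) →
        (∀ n, z' n = ε n * z n + t * (if ε n = -1 then 1 else 0)) →
        (∀ n, z'' n = (ε n * ε' n) * y n + t * (if ε n * ε' n = -1 then 1 else 0)) →
        z'' = z') ∧
    -- ... each T_ε is an involution (in particular invertible) ...
    (∀ ε : ℕ → ℝ, (∀ n, ε n = 1 ∨ ε n = -1) → {n | ε n = -1}.Finite →
      ∀ (y z z' : ZeroAtInftyContinuousMap ℕ ℝ) (t : ℝ),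
        (∀ n, z n = ε n * y n + t * (if ε n = -1 then 1 else 0)) →
        (∀ n, z' n = ε n * z n + t * (if ε n = -1 then 1 else 0)) →
        z' = y) ∧
    -- ... and ‖T_ε‖ ≤ 2 for the norm ‖(x,t)‖ = ‖x‖∞ + |t| ...
    (∀ ε : ℕ → ℝ, (∀ n, ε n = 1 ∨ ε n = -1) → {n | ε n = -1}.Finite →
      ∀ (y z : ZeroAtInftyContinuousMap ℕ ℝ) (t : ℝ),
        (∀ n, z n = ε n * y n + t * (if ε n = -1 then 1 else 0)) →
        ‖z‖ + |t| ≤ 2 * (‖y‖ + |t|)) ∧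
    -- (2) the projection (x,t) ↦ t admits no G-equivariant linear section ...
    (¬ ∃ s : ℝ →ₗ[ℝ] (ZeroAtInftyContinuousMap ℕ ℝ) × ℝ,
      (∀ r : ℝ, (s r).2 = r) ∧
      ∀ ε : ℕ → ℝ, (∀ n, ε n = 1 ∨ ε n = -1) → {n | ε n = -1}.Finite →
        ∀ (r : ℝ) (z : ZeroAtInftyContinuousMap ℕ ℝ),
          (∀ n, z n = ε n * (s r).1 n + (s r).2 * (if ε n = -1 then 1 else 0)) →
          (z, (s r).2) = s r) ∧
    -- ... equivalently, there is no T_ε-fixed vector x₀ ∈ c₀: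
    (¬ ∃ x₀ : ZeroAtInftyContinuousMap ℕ ℝ,
      ∀ ε : ℕ → ℝ, (∀ n, ε n = 1 ∨ ε n = -1) → {n | ε n = -1}.Finite →
        ∀ n, ε n * x₀ n + (if ε n = -1 then 1 else 0) = x₀ n) := by
  refine ⟨aux_exists, ?_, ?_, ?_, fun ε hε _ => aux_norm ε hε, ?_, aux_no_fixed⟩
  · -- preserves c₀ × {0}
    intro ε hε hfin y
    obtain ⟨z, hz⟩ := aux_exists ε hε hfin y 0
    exact ⟨z, fun n => by rw [hz n]; ring⟩
  · -- multiplicative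
    intro ε ε' hε hfε hε' hfε' y z z' z'' t hz hz' hz''
    ext n
    rw [hz'' n, hz' n, hz n]
    rcases hε n with h | h <;> rcases hε' n with h' | h' <;> norm_num [h, h']
  · -- involution
    intro ε hε hfin y z z' t hz hz'
    ext n
    rw [hz' n, hz n]
    rcases hε n with h | h <;> norm_num [h]
  · -- no equivariant section
    rintro ⟨s, hs2, hequiv⟩
    apply aux_no_fixed
    refine ⟨(s 1).1, fun ε hε hfin n => ?_⟩
    obtain ⟨z, hz⟩ := aux_exists ε hε hfin (s 1).1 (s 1).2
    have heq := hequiv ε hε hfin 1 z hz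
    have h1 : (s 1).2 = 1 := hs2 1
    have hz1 : z = (s 1).1 := congrArg Prod.fst heq
    have := hz n
    rw [hz1, h1] at this
    linarith [this]
end
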